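/- arXiv:1908.10393 — 4 statements merged into one kernel-verified Lean document; each statement's English description precedes it below -/
import Mathlib

section
/- Let ς:H⊗H→A be a k-linear map such that ρ and ς satisfy conditions (2), (4), (11) and (17)–(22), and suppose ς is invertible, i.e. there is a k-linear map ς̄:H⊗H→A satisfying conditions (23) and (24). Then ς̄ is H^L-balanced, i.e. ς̄(hl⊗k)=ς̄(h⊗lk) for all h,k∈H and l∈H^L (so ς̄ factorizes through a map σ̄:H⊗_{H^L}H→A), and, writing σ̄(h,k):=ς̄(h⊗k) and σ(h,k):=ς(h⊗k), the map σ̄ satisfies conditions (13)–(16). Hence σ is an invertible cocycle in the sense of Böhm–Brzeziński. -/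
open scoped TensorProduct

/-- The data of a weak bialgebra structure (together with an antipode and its
inverse) on a `k`-algebra `H`: a comultiplication `Δ`, a counit `ε`, an
antipode `S` and its inverse `Sinv`. -/
structure WeakHopfData (k H : Type*) [Field k] [Ring H] [Algebra k H] where
  Δ : H →ₗ[k] H ⊗[k] H
  ε : H →ₗ[k] k
  S : H →ₗ[k] H
  Sinv : H →ₗ[k] H

section

variable {k H A : Type*} [Field k] [Ring H] [Algebra k H] [Ring A] [Algebra k A]

/-- `Π^L(h) = ε(1⁽¹⁾h)1⁽²⁾`. -/
noncomputable def piL (W : WeakHopfData k H) (h : H) : H :=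
  (TensorProduct.lid k H) ((LinearMap.rTensor H (W.ε ∘ₗ LinearMap.mulRight k h)) (W.Δ 1))

/-- `Π^R(h) = 1⁽¹⁾ε(h1⁽²⁾)`. -/
noncomputable def piR (W : WeakHopfData k H) (h : H) : H :=
  (TensorProduct.rid k H) ((LinearMap.lTensor H (W.ε ∘ₗ LinearMap.mulLeft k h)) (W.Δ 1))

/-- `H^L = im(Π^L)`. -/
def HL (W : WeakHopfData k H) : Set H := Set.range (piL W)

/-- `H^R = im(Π^R)`. -/
def HR (W : WeakHopfData k H) : Set H := Set.range (piR W)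

/-- The axioms of a weak Hopf algebra with bijective antipode, where Sweedler
sums are expressed via arbitrary finite representations of the comultiplication. -/
structure IsWeakHopf (W : WeakHopfData k H) : Prop where
  coassoc : ∀ h : H,
    (TensorProduct.assoc k H H H) ((LinearMap.rTensor H W.Δ) (W.Δ h)) =
      (LinearMap.lTensor H W.Δ) (W.Δ h)
  counit_left : ∀ h : H, (TensorProduct.lid k H) ((LinearMap.rTensor H W.ε) (W.Δ h)) = h
  counit_right : ∀ h : H, (TensorProduct.rid k H) ((LinearMap.lTensor H W.ε) (W.Δ h)) = h
  comul_mul : ∀ h l : H, W.Δ (h * l) = W.Δ h * W.Δ l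
  weak_comul_one₁ : (LinearMap.lTensor H W.Δ) (W.Δ 1) =
    (TensorProduct.assoc k H H H) (W.Δ 1 ⊗ₜ[k] (1 : H)) * ((1 : H) ⊗ₜ[k] W.Δ 1)
  weak_comul_one₂ : (LinearMap.lTensor H W.Δ) (W.Δ 1) =
    ((1 : H) ⊗ₜ[k] W.Δ 1) * (TensorProduct.assoc k H H H) (W.Δ 1 ⊗ₜ[k] (1 : H))
  weak_counit : ∀ h l m : H, ∀ (n : ℕ) (x y : Fin n → H),
    W.Δ l = ∑ i, x i ⊗ₜ[k] y i →
      W.ε (h * l * m) = ∑ i, W.ε (h * x i) * W.ε (y i * m) ∧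
      W.ε (h * l * m) = ∑ i, W.ε (h * y i) * W.ε (x i * m)
  antipode_left : ∀ h : H, ∀ (n : ℕ) (x y : Fin n → H),
    W.Δ h = ∑ i, x i ⊗ₜ[k] y i → ∑ i, x i * W.S (y i) = piL W h
  antipode_right : ∀ h : H, ∀ (n : ℕ) (x y : Fin n → H),
    W.Δ h = ∑ i, x i ⊗ₜ[k] y i → ∑ i, W.S (x i) * y i = piR W h
  antipode_mid : ∀ h : H, ∀ (n : ℕ) (x y : Fin n → H),
    W.Δ h = ∑ i, x i ⊗ₜ[k] y i →
      ∀ (m : Fin n → ℕ) (u v : (i : Fin n) → Fin (m i) → H),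
        (∀ i, W.Δ (y i) = ∑ j, u i j ⊗ₜ[k] v i j) →
          ∑ i, ∑ j, W.S (x i) * u i j * W.S (v i j) = W.S h
  S_Sinv : ∀ h : H, W.S (W.Sinv h) = h
  Sinv_S : ∀ h : H, W.Sinv (W.S h) = h

/-- Condition (1): `h·1_A = Π^L(h)·1_A`. -/
def cond1 (W : WeakHopfData k H) (ρ : H →ₗ[k] A →ₗ[k] A) : Prop :=
  ∀ h : H, ρ h 1 = ρ (piL W h) 1

/-- Condition (2): `h·(aa') = (h⁽¹⁾·a)(h⁽²⁾·a')`. -/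
def cond2 (W : WeakHopfData k H) (ρ : H →ₗ[k] A →ₗ[k] A) : Prop :=
  ∀ (h : H) (a a' : A) (n : ℕ) (x y : Fin n → H),
    W.Δ h = ∑ i, x i ⊗ₜ[k] y i → ρ h (a * a') = ∑ i, ρ (x i) a * ρ (y i) a'

/-- Condition (3): `S⁻¹(l)h·a = (h·a)(l·1_A)` and `lh·a = (l·1_A)(h·a)` for `l ∈ H^L`. -/
def cond3 (W : WeakHopfData k H) (ρ : H →ₗ[k] A →ₗ[k] A) : Prop :=
  ∀ (h : H) (a : A), ∀ l ∈ HL W,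
    ρ (W.Sinv l * h) a = ρ h a * ρ l 1 ∧ ρ (l * h) a = ρ l 1 * ρ h a

/-- Condition (4): `1·a = a`. -/
def cond4 (ρ : H →ₗ[k] A →ₗ[k] A) : Prop := ∀ a : A, ρ 1 a = a

/-- Condition (5). -/
def cond5 (W : WeakHopfData k H) (ρ : H →ₗ[k] A →ₗ[k] A) (σ : H → H → A) : Prop :=
  ∀ (h g : H), ∀ l ∈ HL W,
    σ (l * h) g = ρ l 1 * σ h g ∧ σ (W.Sinv l * h) g = σ h g * ρ l 1

/-- Condition (6): `(h⁽¹⁾·(l·1_A))σ(h⁽²⁾,k) = σ(h,lk)` for `l ∈ H^L`. -/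
def cond6 (W : WeakHopfData k H) (ρ : H →ₗ[k] A →ₗ[k] A) (σ : H → H → A) : Prop :=
  ∀ (h g : H), ∀ l ∈ HL W, ∀ (n : ℕ) (x y : Fin n → H),
    W.Δ h = ∑ i, x i ⊗ₜ[k] y i →
      ∑ i, ρ (x i) (ρ l 1) * σ (y i) g = σ h (l * g)

/-- Condition (7): `σ(1,h) = σ(h,1) = h·1_A`. -/
def cond7 (ρ : H →ₗ[k] A →ₗ[k] A) (σ : H → H → A) : Prop :=
  ∀ h : H, σ 1 h = ρ h 1 ∧ σ h 1 = ρ h 1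

/-- Condition (8), the cocycle condition. -/
def cond8 (W : WeakHopfData k H) (ρ : H →ₗ[k] A →ₗ[k] A) (σ : H → H → A) : Prop :=
  ∀ (h g m : H) (n₁ : ℕ) (x₁ y₁ : Fin n₁ → H) (n₂ : ℕ) (x₂ y₂ : Fin n₂ → H)
    (n₃ : ℕ) (x₃ y₃ : Fin n₃ → H),
    W.Δ h = ∑ i, x₁ i ⊗ₜ[k] y₁ i → W.Δ g = ∑ i, x₂ i ⊗ₜ[k] y₂ i →
    W.Δ m = ∑ i, x₃ i ⊗ₜ[k] y₃ i →
      ∑ i, ∑ j, ∑ p, ρ (x₁ i) (σ (x₂ j) (x₃ p)) * σ (y₁ i) (y₂ j * y₃ p) =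
        ∑ i, ∑ j, σ (x₁ i) (x₂ j) * σ (y₁ i * y₂ j) m

/-- Condition (9), the twisted module condition. -/
def cond9 (W : WeakHopfData k H) (ρ : H →ₗ[k] A →ₗ[k] A) (σ : H → H → A) : Prop :=
  ∀ (h g : H) (a : A) (n : ℕ) (x y : Fin n → H) (m : ℕ) (u v : Fin m → H),
    W.Δ h = ∑ i, x i ⊗ₜ[k] y i → W.Δ g = ∑ j, u j ⊗ₜ[k] v j →
      ∑ i, ∑ j, ρ (x i) (ρ (u j) a) * σ (y i) (v j) =
        ∑ i, ∑ j, σ (x i) (u j) * ρ (y i * v j) a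

/-- Condition (10): `h·(l·1_A) = hl·1_A` for `l ∈ H^L`. -/
def cond10 (W : WeakHopfData k H) (ρ : H →ₗ[k] A →ₗ[k] A) : Prop :=
  ∀ h : H, ∀ l ∈ HL W, ρ h (ρ l 1) = ρ (h * l) 1

/-- Condition (11): `h·(l·1_A) = hl·1_A` for all `h, l ∈ H`. -/
def cond11 (ρ : H →ₗ[k] A →ₗ[k] A) : Prop :=
  ∀ h l : H, ρ h (ρ l 1) = ρ (h * l) 1

/-- Condition (12): `σ(h,l) = σ(hl,1)` for `l ∈ H^L`. -/
def cond12 (W : WeakHopfData k H) (σ : H → H → A) : Prop :=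
  ∀ h : H, ∀ l ∈ HL W, σ h l = σ (h * l) 1

/-- Condition (13). -/
def cond13 (W : WeakHopfData k H) (ρ : H →ₗ[k] A →ₗ[k] A) (σbar : H → H → A) : Prop :=
  ∀ (h g : H) (n : ℕ) (x y : Fin n → H) (m : ℕ) (u v : Fin m → H),
    W.Δ h = ∑ i, x i ⊗ₜ[k] y i → W.Δ g = ∑ j, u j ⊗ₜ[k] v j →
      σbar h g = ∑ i, ∑ j, ρ (x i * u j) 1 * σbar (y i) (v j)

/-- Condition (14). -/
def cond14 (W : WeakHopfData k H) (ρ : H →ₗ[k] A →ₗ[k] A) (σbar : H → H → A) : Prop :=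
  ∀ (h g : H), ∀ l ∈ HL W,
    σbar (l * h) g = ρ l 1 * σbar h g ∧ σbar (W.Sinv l * h) g = σbar h g * ρ l 1

/-- Condition (15). -/
def cond15 (W : WeakHopfData k H) (ρ : H →ₗ[k] A →ₗ[k] A) (σbar : H → H → A) : Prop :=
  ∀ (h g : H), ∀ l ∈ HL W, ∀ (n : ℕ) (x y : Fin n → H),
    W.Δ h = ∑ i, x i ⊗ₜ[k] y i →
      ∑ i, σbar (x i) g * ρ (y i) (ρ l 1) = σbar h (W.Sinv l * g)

/-- Condition (16). -/
def cond16 (W : WeakHopfData k H) (ρ : H →ₗ[k] A →ₗ[k] A) (σ σbar : H → H → A) : Prop :=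
  ∀ (h g : H) (n : ℕ) (x y : Fin n → H) (m : ℕ) (u v : Fin m → H),
    W.Δ h = ∑ i, x i ⊗ₜ[k] y i → W.Δ g = ∑ j, u j ⊗ₜ[k] v j →
      (∑ i, ∑ j, σ (x i) (u j) * σbar (y i) (v j) = ρ h (ρ g 1)) ∧
      (∑ i, ∑ j, σbar (x i) (u j) * σ (y i) (v j) = ρ (h * g) 1)

/-- Condition (17), the cocycle condition for `ς : H ⊗ H → A`. -/
def cond17 (W : WeakHopfData k H) (ρ : H →ₗ[k] A →ₗ[k] A) (ς : H ⊗[k] H → A) : Prop :=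
  ∀ (h g m : H) (n₁ : ℕ) (x₁ y₁ : Fin n₁ → H) (n₂ : ℕ) (x₂ y₂ : Fin n₂ → H)
    (n₃ : ℕ) (x₃ y₃ : Fin n₃ → H),
    W.Δ h = ∑ i, x₁ i ⊗ₜ[k] y₁ i → W.Δ g = ∑ i, x₂ i ⊗ₜ[k] y₂ i →
    W.Δ m = ∑ i, x₃ i ⊗ₜ[k] y₃ i →
      ∑ i, ∑ j, ∑ p, ρ (x₁ i) (ς (x₂ j ⊗ₜ[k] x₃ p)) * ς (y₁ i ⊗ₜ[k] (y₂ j * y₃ p)) =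
        ∑ i, ∑ j, ς (x₁ i ⊗ₜ[k] x₂ j) * ς ((y₁ i * y₂ j) ⊗ₜ[k] m)

/-- Condition (18), the twisted module condition for `ς : H ⊗ H → A`. -/
def cond18 (W : WeakHopfData k H) (ρ : H →ₗ[k] A →ₗ[k] A) (ς : H ⊗[k] H → A) : Prop :=
  ∀ (h g : H) (a : A) (n : ℕ) (x y : Fin n → H) (m : ℕ) (u v : Fin m → H),
    W.Δ h = ∑ i, x i ⊗ₜ[k] y i → W.Δ g = ∑ j, u j ⊗ₜ[k] v j →
      ∑ i, ∑ j, ρ (x i) (ρ (u j) a) * ς (y i ⊗ₜ[k] v j) =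
        ∑ i, ∑ j, ς (x i ⊗ₜ[k] u j) * ρ (y i * v j) a

/-- Condition (19). -/
def cond19 (W : WeakHopfData k H) (ρ : H →ₗ[k] A →ₗ[k] A) (ς : H ⊗[k] H → A) : Prop :=
  ∀ (h g : H) (n : ℕ) (x y : Fin n → H) (m : ℕ) (u v : Fin m → H),
    W.Δ h = ∑ i, x i ⊗ₜ[k] y i → W.Δ g = ∑ j, u j ⊗ₜ[k] v j →
      ς (h ⊗ₜ[k] g) = ∑ i, ∑ j, ς (x i ⊗ₜ[k] u j) * ρ (y i * v j) 1

/-- Condition (20). -/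
def cond20 (W : WeakHopfData k H) (ρ : H →ₗ[k] A →ₗ[k] A) (ς : H ⊗[k] H → A) : Prop :=
  ∀ (h : H) (n : ℕ) (x y : Fin n → H) (m : ℕ) (u v : Fin m → H),
    W.Δ h = ∑ i, x i ⊗ₜ[k] y i → W.Δ 1 = ∑ j, u j ⊗ₜ[k] v j →
      ρ h 1 = ∑ i, ∑ j, ρ (x i) (ρ (u j) 1) * ς (y i ⊗ₜ[k] v j)

/-- Condition (21). -/
def cond21 (W : WeakHopfData k H) (ρ : H →ₗ[k] A →ₗ[k] A) (ς : H ⊗[k] H → A) : Prop :=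
  ∀ (h : H) (m : ℕ) (u v : Fin m → H),
    W.Δ 1 = ∑ j, u j ⊗ₜ[k] v j →
      ρ h 1 = ∑ j, ρ (u j) 1 * ς (v j ⊗ₜ[k] h)

/-- Condition (22): `a(1⁽¹⁾·1_A) ⊗ 1⁽²⁾ = (1⁽¹⁾·a) ⊗ 1⁽²⁾` in `A ⊗ H`. -/
def cond22 (W : WeakHopfData k H) (ρ : H →ₗ[k] A →ₗ[k] A) : Prop :=
  ∀ (a : A) (m : ℕ) (u v : Fin m → H),
    W.Δ 1 = ∑ j, u j ⊗ₜ[k] v j →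
      (∑ j, (a * ρ (u j) 1) ⊗ₜ[k] v j) = ∑ j, (ρ (u j) a) ⊗ₜ[k] v j

/-- Condition (23). -/
def cond23 (W : WeakHopfData k H) (ρ : H →ₗ[k] A →ₗ[k] A) (ςbar : H ⊗[k] H → A) : Prop :=
  ∀ (h g : H) (n : ℕ) (x y : Fin n → H) (m : ℕ) (u v : Fin m → H),
    W.Δ h = ∑ i, x i ⊗ₜ[k] y i → W.Δ g = ∑ j, u j ⊗ₜ[k] v j →
      ςbar (h ⊗ₜ[k] g) = ∑ i, ∑ j, ρ (x i * u j) 1 * ςbar (y i ⊗ₜ[k] v j)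

/-- Condition (24). -/
def cond24 (W : WeakHopfData k H) (ρ : H →ₗ[k] A →ₗ[k] A) (ς ςbar : H ⊗[k] H → A) : Prop :=
  ∀ (h g : H) (n : ℕ) (x y : Fin n → H) (m : ℕ) (u v : Fin m → H),
    W.Δ h = ∑ i, x i ⊗ₜ[k] y i → W.Δ g = ∑ j, u j ⊗ₜ[k] v j →
      (∑ i, ∑ j, ς (x i ⊗ₜ[k] u j) * ςbar (y i ⊗ₜ[k] v j) = ρ (h * g) 1) ∧
      (∑ i, ∑ j, ςbar (x i ⊗ₜ[k] u j) * ς (y i ⊗ₜ[k] v j) = ρ (h * g) 1)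

/-- `σ` is `H^R`-balanced: `σ(hr,k) = σ(h,rk)` for `r ∈ H^R`. -/
def HRBalanced (W : WeakHopfData k H) (σ : H → H → A) : Prop :=
  ∀ (h g : H), ∀ r ∈ HR W, σ (h * r) g = σ h (r * g)

/-- `σbar` is `H^L`-balanced: `σbar(hl,k) = σbar(h,lk)` for `l ∈ H^L`. -/
def HLBalanced (W : WeakHopfData k H) (σbar : H → H → A) : Prop :=
  ∀ (h g : H), ∀ l ∈ HL W, σbar (h * l) g = σbar h (l * g)

/-- The idempotent `∇ρ : A ⊗ H → A ⊗ H`, `a ⊗ h ↦ a(h⁽¹⁾·1_A) ⊗ h⁽²⁾`. -/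
noncomputable def nabla (W : WeakHopfData k H) (ρ : H →ₗ[k] A →ₗ[k] A) :
    A ⊗[k] H →ₗ[k] A ⊗[k] H :=
  (LinearMap.rTensor H (LinearMap.mul' k A ∘ₗ LinearMap.lTensor A (ρ.flip 1))) ∘ₗ
    (TensorProduct.assoc k A H H).symm.toLinearMap ∘ₗ LinearMap.lTensor A W.Δ

/-- The subspace `N` of `A ⊗ H` spanned by the elements
`a(l·1_A) ⊗ h - a ⊗ lh` with `l ∈ H^L`, so that `(A ⊗ H)/N = A ⊗_{H^L} H`. -/
def relN (W : WeakHopfData k H) (ρ : H →ₗ[k] A →ₗ[k] A) : Submodule k (A ⊗[k] H) :=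
  Submodule.span k
    {z | ∃ (a : A) (l h : H), l ∈ HL W ∧ z = (a * ρ l 1) ⊗ₜ[k] h - a ⊗ₜ[k] (l * h)}

/-- The map `σ̃(h,k) := (h⁽¹⁾k⁽¹⁾·1_A)σ̄(h⁽²⁾,k⁽²⁾)`. -/
noncomputable def sigmaTilde (W : WeakHopfData k H) (ρ : H →ₗ[k] A →ₗ[k] A)
    (σbar : H →ₗ[k] H →ₗ[k] A) : H → H → A := fun h g =>
  LinearMap.mul' k A
    ((TensorProduct.map ((ρ.flip 1) ∘ₗ LinearMap.mul' k H) (TensorProduct.lift σbar))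
      ((TensorProduct.tensorTensorTensorComm k H H H H) (W.Δ h ⊗ₜ[k] W.Δ g)))

end
set_option synthInstance.maxHeartbeats 1000000
set_option maxHeartbeats 1000000

namespace S13

open TensorProduct LinearMap

variable {k H A : Type*} [Field k] [Ring H] [Algebra k H] [Ring A] [Algebra k A]

/-- product of two linear maps into an algebra, as a bilinear map -/
noncomputable def bl {M₁ M₂ : Type*} [AddCommMonoid M₁] [Module k M₁]
    [AddCommMonoid M₂] [Module k M₂] (α : M₁ →ₗ[k] A) (β : M₂ →ₗ[k] A) :
    M₁ →ₗ[k] M₂ →ₗ[k] A :=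
  ((LinearMap.mul k A).comp α).compl₂ β

@[simp] lemma bl_apply {M₁ M₂ : Type*} [AddCommMonoid M₁] [Module k M₁]
    [AddCommMonoid M₂] [Module k M₂] (α : M₁ →ₗ[k] A) (β : M₂ →ₗ[k] A)
    (a : M₁) (b : M₂) : bl α β a b = α a * β b := rfl

/-- scalar-weighted bilinear map -/
noncomputable def blε {M₁ M₂ N : Type*} [AddCommMonoid M₁] [Module k M₁]
    [AddCommMonoid M₂] [Module k M₂] [AddCommMonoid N] [Module k N]
    (φ : M₁ →ₗ[k] k) (β : M₂ →ₗ[k] N) : M₁ →ₗ[k] M₂ →ₗ[k] N :=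
  ((LinearMap.lsmul k N).comp φ).compl₂ β

@[simp] lemma blε_apply {M₁ M₂ N : Type*} [AddCommMonoid M₁] [Module k M₁]
    [AddCommMonoid M₂] [Module k M₂] [AddCommMonoid N] [Module k N]
    (φ : M₁ →ₗ[k] k) (β : M₂ →ₗ[k] N) (a : M₁) (b : M₂) :
    blε φ β a b = φ a • β b := rfl

variable (k H) in
/-- `a ↦ a ⊗ₜ c` -/
noncomputable def tmr (c : H) : H →ₗ[k] H ⊗[k] H := (TensorProduct.mk k H H).flip c

@[simp] lemma tmr_apply (c a : H) : tmr k H c a = a ⊗ₜ[k] c := rfl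

variable (k H) in
/-- `b ↦ c ⊗ₜ b` -/
noncomputable def tml (c : H) : H →ₗ[k] H ⊗[k] H := TensorProduct.mk k H H c

@[simp] lemma tml_apply (c b : H) : tml k H c b = c ⊗ₜ[k] b := rfl

/-- trilinear map `(a,b,c) ↦ α a * β b * γ c` -/
noncomputable def tr (α β γ : H →ₗ[k] A) : H →ₗ[k] H →ₗ[k] H →ₗ[k] A where
  toFun a := bl ((bl α β) a) γ
  map_add' a a' := by ext b c; simp [add_mul]
  map_smul' r a := by ext b c; simp [smul_mul_assoc]

@[simp] lemma tr_apply (α β γ : H →ₗ[k] A) (a b c : H) :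
    tr α β γ a b c = α a * β b * γ c := rfl

/-- trilinear map `(a,b,c) ↦ φ a • B b c` -/
noncomputable def sm3₁ {M : Type*} [AddCommMonoid M] [Module k M]
    (φ : H →ₗ[k] k) (B : H →ₗ[k] H →ₗ[k] M) : H →ₗ[k] H →ₗ[k] H →ₗ[k] M where
  toFun a := φ a • B
  map_add' a a' := by simp [add_smul]
  map_smul' r a := by simp [mul_smul]

@[simp] lemma sm3₁_apply {M : Type*} [AddCommMonoid M] [Module k M]
    (φ : H →ₗ[k] k) (B : H →ₗ[k] H →ₗ[k] M) (a b c : H) :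
    sm3₁ φ B a b c = φ a • B b c := rfl

/-- trilinear map `(a,b,c) ↦ φ b • B a c` -/
noncomputable def sm3₂ {M : Type*} [AddCommMonoid M] [Module k M]
    (φ : H →ₗ[k] k) (B : H →ₗ[k] H →ₗ[k] M) : H →ₗ[k] H →ₗ[k] H →ₗ[k] M where
  toFun a := (blε φ (B a) : H →ₗ[k] H →ₗ[k] M)
  map_add' a a' := by
    ext b c; simp only [blε_apply, map_add, LinearMap.add_apply, smul_add]
  map_smul' r a := by
    ext b c
    simp only [blε_apply, map_smul, LinearMap.smul_apply, RingHom.id_apply]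
    rw [smul_comm]

@[simp] lemma sm3₂_apply {M : Type*} [AddCommMonoid M] [Module k M]
    (φ : H →ₗ[k] k) (B : H →ₗ[k] H →ₗ[k] M) (a b c : H) :
    sm3₂ φ B a b c = φ b • B a c := rfl

/-- trilinear map `(a,b,c) ↦ (φ a * ψ c) • β b` -/
noncomputable def sm3₁₃ {M : Type*} [AddCommMonoid M] [Module k M]
    (φ ψ : H →ₗ[k] k) (β : H →ₗ[k] M) : H →ₗ[k] H →ₗ[k] H →ₗ[k] M where
  toFun a := φ a • (blε ψ β).flip
  map_add' a a' := by simp [add_smul]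
  map_smul' r a := by simp [mul_smul]

@[simp] lemma sm3₁₃_apply {M : Type*} [AddCommMonoid M] [Module k M]
    (φ ψ : H →ₗ[k] k) (β : H →ₗ[k] M) (a b c : H) :
    sm3₁₃ φ ψ β a b c = φ a • ψ c • β b := rfl

section WH

variable (W : WeakHopfData k H)

lemma exists_rep (t : H ⊗[k] H) :
    ∃ (n : ℕ) (x y : Fin n → H), t = ∑ i, x i ⊗ₜ[k] y i := by
  obtain ⟨s, hs⟩ := TensorProduct.exists_finset t
  refine ⟨s.card, fun i => ((s.equivFin.symm i : s) : H × H).1,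
    fun i => ((s.equivFin.symm i : s) : H × H).2, ?_⟩
  rw [hs, ← Finset.sum_attach s (fun p => p.1 ⊗ₜ[k] p.2)]
  refine Fintype.sum_equiv s.equivFin.symm _ _ (fun p => rfl) |>.symm.trans ?_
  rfl

/-- evaluating a bilinear map on a representation -/
lemma rep_sum {M : Type*} [AddCommMonoid M] [Module k M]
    (F : H →ₗ[k] H →ₗ[k] M) {t : H ⊗[k] H} {ι : Type*} [Fintype ι]
    {x y : ι → H} (h : t = ∑ i, x i ⊗ₜ[k] y i) :
    ∑ i, F (x i) (y i) = TensorProduct.lift F t := by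
  rw [h, map_sum]; simp

/-- two representations of the same tensor give the same bilinear sums -/
lemma rep_eq {M : Type*} [AddCommMonoid M] [Module k M]
    (F : H →ₗ[k] H →ₗ[k] M) {t : H ⊗[k] H} {ι κ : Type*} [Fintype ι] [Fintype κ]
    {x y : ι → H} {p q : κ → H} (h1 : t = ∑ i, x i ⊗ₜ[k] y i)
    (h2 : t = ∑ j, p j ⊗ₜ[k] q j) :
    ∑ i, F (x i) (y i) = ∑ j, F (p j) (q j) := by
  rw [rep_sum F h1, rep_sum F h2]

lemma rep_mul (hW : IsWeakHopf W) {a b : H} {ι κ : Type*} [Fintype ι] [Fintype κ]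
    {x y : ι → H} {u v : κ → H} (ha : W.Δ a = ∑ i, x i ⊗ₜ[k] y i)
    (hb : W.Δ b = ∑ j, u j ⊗ₜ[k] v j) :
    W.Δ (a * b) = ∑ p : ι × κ, (x p.1 * u p.2) ⊗ₜ[k] (y p.1 * v p.2) := by
  rw [hW.comul_mul, ha, hb, Finset.sum_mul_sum, Fintype.sum_prod_type]
  simp [Algebra.TensorProduct.tmul_mul_tmul]

/-- `Δ h = Δ 1 * Δ h` in representation form. -/
lemma rep_one_mul (hW : IsWeakHopf W) {a : H} {ι κ : Type*} [Fintype ι] [Fintype κ]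
    {x y : ι → H} {u v : κ → H} (ha : W.Δ a = ∑ i, x i ⊗ₜ[k] y i)
    (h1 : W.Δ 1 = ∑ j, u j ⊗ₜ[k] v j) :
    W.Δ a = ∑ p : κ × ι, (u p.1 * x p.2) ⊗ₜ[k] (v p.1 * y p.2) := by
  have := rep_mul W hW h1 ha
  rwa [one_mul] at this

lemma rep_mul_one (hW : IsWeakHopf W) {a : H} {ι κ : Type*} [Fintype ι] [Fintype κ]
    {x y : ι → H} {u v : κ → H} (ha : W.Δ a = ∑ i, x i ⊗ₜ[k] y i)
    (h1 : W.Δ 1 = ∑ j, u j ⊗ₜ[k] v j) :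
    W.Δ a = ∑ p : ι × κ, (x p.1 * u p.2) ⊗ₜ[k] (y p.1 * v p.2) := by
  have := rep_mul W hW ha h1
  rwa [mul_one] at this

end WH

/-- lift of a trilinear map to `H ⊗ (H ⊗ H)` -/
noncomputable def L3 {M : Type*} [AddCommMonoid M] [Module k M]
    (F : H →ₗ[k] H →ₗ[k] H →ₗ[k] M) : H ⊗[k] (H ⊗[k] H) →ₗ[k] M :=
  TensorProduct.lift ((TensorProduct.lift.equiv (RingHom.id k) H H M).toLinearMap ∘ₗ F)

@[simp] lemma L3_tmul {M : Type*} [AddCommMonoid M] [Module k M]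
    (F : H →ₗ[k] H →ₗ[k] H →ₗ[k] M) (a b c : H) :
    L3 F (a ⊗ₜ[k] (b ⊗ₜ[k] c)) = F a b c := by
  simp [L3, TensorProduct.lift.equiv]

/-- `(a,b) ↦ F a b c` for fixed `c` -/
noncomputable def endApp {M : Type*} [AddCommMonoid M] [Module k M]
    (F : H →ₗ[k] H →ₗ[k] H →ₗ[k] M) (c : H) : H →ₗ[k] H →ₗ[k] M where
  toFun a := (F a).flip c
  map_add' a a' := by ext b; simp
  map_smul' r a := by ext b; simp

@[simp] lemma endApp_apply {M : Type*} [AddCommMonoid M] [Module k M]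
    (F : H →ₗ[k] H →ₗ[k] H →ₗ[k] M) (a b c : H) : endApp F c a b = F a b c := rfl

lemma L3_assoc_tmul {M : Type*} [AddCommMonoid M] [Module k M]
    (F : H →ₗ[k] H →ₗ[k] H →ₗ[k] M) (t : H ⊗[k] H) (c : H) :
    L3 F ((TensorProduct.assoc k H H H) (t ⊗ₜ[k] c)) =
      TensorProduct.lift (endApp F c) t := by
  induction t using TensorProduct.induction_on with
  | zero => rw [TensorProduct.zero_tmul]; simp
  | tmul a b => simp
  | add s t hs ht =>
      rw [TensorProduct.add_tmul, map_add, map_add, hs, ht, map_add]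

section WH2

variable (W : WeakHopfData k H)

/-- evaluation of `L3 F` on `(Δ ⊗ 1)(Δ h)` -/
lemma L3_eval₁ {M : Type*} [AddCommMonoid M] [Module k M]
    (F : H →ₗ[k] H →ₗ[k] H →ₗ[k] M) {a : H} {ι : Type*} [Fintype ι]
    {x y : ι → H} (ha : W.Δ a = ∑ i, x i ⊗ₜ[k] y i) :
    L3 F ((TensorProduct.assoc k H H H) ((LinearMap.rTensor H W.Δ) (W.Δ a))) =
      ∑ i, TensorProduct.lift (endApp F (y i)) (W.Δ (x i)) := by
  rw [ha]
  simp only [map_sum, LinearMap.rTensor_tmul]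
  exact Finset.sum_congr rfl fun i _ => L3_assoc_tmul F _ _

/-- evaluation of `L3 F` on `(1 ⊗ Δ)(Δ h)` -/
lemma L3_eval₂ {M : Type*} [AddCommMonoid M] [Module k M]
    (F : H →ₗ[k] H →ₗ[k] H →ₗ[k] M) {a : H} {ι : Type*} [Fintype ι]
    {x y : ι → H} (ha : W.Δ a = ∑ i, x i ⊗ₜ[k] y i) :
    L3 F ((LinearMap.lTensor H W.Δ) (W.Δ a)) =
      ∑ i, TensorProduct.lift (F (x i)) (W.Δ (y i)) := by
  rw [ha]
  simp only [map_sum, LinearMap.lTensor_tmul]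
  refine Finset.sum_congr rfl fun i _ => ?_
  generalize W.Δ (y i) = t
  induction t using TensorProduct.induction_on with
  | zero => simp
  | tmul b c => simp
  | add s t hs ht => rw [TensorProduct.tmul_add, map_add, map_add, hs, ht]

/-- coassociativity in lift form -/
lemma co_lift (hW : IsWeakHopf W) {M : Type*} [AddCommMonoid M] [Module k M]
    (F : H →ₗ[k] H →ₗ[k] H →ₗ[k] M) {a : H} {ι : Type*} [Fintype ι]
    {x y : ι → H} (ha : W.Δ a = ∑ i, x i ⊗ₜ[k] y i) :
    ∑ i, TensorProduct.lift (endApp F (y i)) (W.Δ (x i)) =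
      ∑ i, TensorProduct.lift (F (x i)) (W.Δ (y i)) := by
  rw [← L3_eval₁ W F ha, ← L3_eval₂ W F ha, hW.coassoc]

end WH2

end S13
namespace S13

open TensorProduct LinearMap

variable {k H A : Type*} [Field k] [Ring H] [Algebra k H] [Ring A] [Algebra k A]
variable (W : WeakHopfData k H)

/-- coassociativity at the level of representations -/
lemma co_sum (hW : IsWeakHopf W) {M : Type*} [AddCommMonoid M] [Module k M]
    (F : H →ₗ[k] H →ₗ[k] H →ₗ[k] M) {a : H} {ι : Type*} [Fintype ι]
    {x y : ι → H} (ha : W.Δ a = ∑ i, x i ⊗ₜ[k] y i)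
    {nX : ι → ℕ} {X Y : ∀ i, Fin (nX i) → H}
    (hXY : ∀ i, W.Δ (x i) = ∑ p, X i p ⊗ₜ[k] Y i p)
    {nY : ι → ℕ} {Y' Z' : ∀ i, Fin (nY i) → H}
    (hYZ : ∀ i, W.Δ (y i) = ∑ p, Y' i p ⊗ₜ[k] Z' i p) :
    ∑ i, ∑ p, F (X i p) (Y i p) (y i) = ∑ i, ∑ p, F (x i) (Y' i p) (Z' i p) := by
  calc ∑ i, ∑ p, F (X i p) (Y i p) (y i)
      = ∑ i, TensorProduct.lift (endApp F (y i)) (W.Δ (x i)) := by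
        refine Finset.sum_congr rfl fun i _ => ?_
        rw [← rep_sum (endApp F (y i)) (hXY i)]
        rfl
    _ = ∑ i, TensorProduct.lift (F (x i)) (W.Δ (y i)) := co_lift W hW F ha
    _ = ∑ i, ∑ p, F (x i) (Y' i p) (Z' i p) := by
        refine Finset.sum_congr rfl fun i _ => ?_
        rw [← rep_sum (F (x i)) (hYZ i)]

lemma sum4_comm {ι κ : Type*} [Fintype ι] [Fintype κ] {P : ι → Type*}
    {Q : κ → Type*} [∀ i, Fintype (P i)] [∀ j, Fintype (Q j)] {M : Type*}
    [AddCommMonoid M] (T : ∀ i : ι, P i → ∀ j : κ, Q j → M) :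
    (∑ i, ∑ p, ∑ j, ∑ q, T i p j q) = ∑ j, ∑ q, ∑ i, ∑ p, T i p j q := by
  calc (∑ i, ∑ p, ∑ j, ∑ q, T i p j q)
      = ∑ i, ∑ j, ∑ p, ∑ q, T i p j q :=
        Finset.sum_congr rfl fun i _ => Finset.sum_comm
    _ = ∑ j, ∑ i, ∑ p, ∑ q, T i p j q := Finset.sum_comm
    _ = ∑ j, ∑ i, ∑ q, ∑ p, T i p j q :=
        Finset.sum_congr rfl fun j _ =>
          Finset.sum_congr rfl fun i _ => Finset.sum_comm
    _ = ∑ j, ∑ q, ∑ i, ∑ p, T i p j q :=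
        Finset.sum_congr rfl fun j _ => Finset.sum_comm

/-- convolution product on `Hom(H ⊗ H, A)` -/
noncomputable def cv (f g : H ⊗[k] H →ₗ[k] A) : H ⊗[k] H →ₗ[k] A :=
  LinearMap.mul' k A ∘ₗ TensorProduct.map f g ∘ₗ
    (TensorProduct.tensorTensorTensorComm k H H H H).toLinearMap ∘ₗ
    TensorProduct.map W.Δ W.Δ

lemma cv_tmul (f g : H ⊗[k] H →ₗ[k] A) {a b : H} {ι κ : Type*} [Fintype ι]
    [Fintype κ] {x y : ι → H} {u v : κ → H}
    (ha : W.Δ a = ∑ i, x i ⊗ₜ[k] y i) (hb : W.Δ b = ∑ j, u j ⊗ₜ[k] v j) :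
    cv W f g (a ⊗ₜ[k] b) =
      ∑ i, ∑ j, f (x i ⊗ₜ[k] u j) * g (y i ⊗ₜ[k] v j) := by
  simp only [cv, LinearMap.comp_apply, TensorProduct.map_tmul, ha, hb]
  rw [TensorProduct.sum_tmul]
  simp only [map_sum]
  refine Finset.sum_congr rfl fun i _ => ?_
  rw [TensorProduct.tmul_sum]
  simp only [map_sum]
  refine Finset.sum_congr rfl fun j _ => ?_
  simp only [LinearEquiv.coe_coe, TensorProduct.tensorTensorTensorComm_tmul,
    TensorProduct.map_tmul, LinearMap.mul'_apply]

lemma cv_assoc (hW : IsWeakHopf W) (f g h' : H ⊗[k] H →ₗ[k] A) :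
    cv W (cv W f g) h' = cv W f (cv W g h') := by
  apply TensorProduct.ext'
  intro a b
  obtain ⟨na, x, y, hxy⟩ := exists_rep (W.Δ a)
  obtain ⟨nb, u, v, huv⟩ := exists_rep (W.Δ b)
  choose nX X Y hXY using fun i => exists_rep (W.Δ (x i))
  choose nY Y' Z' hYZ using fun i => exists_rep (W.Δ (y i))
  choose nU U V hUV using fun j => exists_rep (W.Δ (u j))
  choose nV V' W' hVW using fun j => exists_rep (W.Δ (v j))
  have hbco : ∀ c₁ c₂ c₃ : H,
      (∑ j, ∑ q, f (c₁ ⊗ₜ[k] U j q) * g (c₂ ⊗ₜ[k] V j q) * h' (c₃ ⊗ₜ[k] v j)) =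
      ∑ j, ∑ q, f (c₁ ⊗ₜ[k] u j) * g (c₂ ⊗ₜ[k] V' j q) * h' (c₃ ⊗ₜ[k] W' j q) := by
    intro c₁ c₂ c₃
    have := co_sum W hW (tr (f ∘ₗ tml k H c₁) (g ∘ₗ tml k H c₂) (h' ∘ₗ tml k H c₃))
      huv hUV hVW
    simpa using this
  have haco : ∀ c₁ c₂ c₃ : H,
      (∑ i, ∑ p, f (X i p ⊗ₜ[k] c₁) * g (Y i p ⊗ₜ[k] c₂) * h' (y i ⊗ₜ[k] c₃)) =
      ∑ i, ∑ p, f (x i ⊗ₜ[k] c₁) * g (Y' i p ⊗ₜ[k] c₂) * h' (Z' i p ⊗ₜ[k] c₃) := by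
    intro c₁ c₂ c₃
    have := co_sum W hW (tr (f ∘ₗ tmr k H c₁) (g ∘ₗ tmr k H c₂) (h' ∘ₗ tmr k H c₃))
      hxy hXY hYZ
    simpa using this
  calc cv W (cv W f g) h' (a ⊗ₜ[k] b)
      = ∑ i, ∑ j, cv W f g (x i ⊗ₜ[k] u j) * h' (y i ⊗ₜ[k] v j) :=
        cv_tmul W _ _ hxy huv
    _ = ∑ i, ∑ j, ∑ p, ∑ q,
          f (X i p ⊗ₜ[k] U j q) * g (Y i p ⊗ₜ[k] V j q) * h' (y i ⊗ₜ[k] v j) := by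
        refine Finset.sum_congr rfl fun i _ => Finset.sum_congr rfl fun j _ => ?_
        rw [cv_tmul W f g (hXY i) (hUV j), Finset.sum_mul]
        exact Finset.sum_congr rfl fun p _ => Finset.sum_mul ..
    _ = ∑ i, ∑ p, ∑ j, ∑ q,
          f (X i p ⊗ₜ[k] U j q) * g (Y i p ⊗ₜ[k] V j q) * h' (y i ⊗ₜ[k] v j) :=
        Finset.sum_congr rfl fun i _ => Finset.sum_comm
    _ = ∑ i, ∑ p, ∑ j, ∑ q,
          f (X i p ⊗ₜ[k] u j) * g (Y i p ⊗ₜ[k] V' j q) * h' (y i ⊗ₜ[k] W' j q) :=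
        Finset.sum_congr rfl fun i _ => Finset.sum_congr rfl fun p _ =>
          hbco (X i p) (Y i p) (y i)
    _ = ∑ j, ∑ q, ∑ i, ∑ p,
          f (X i p ⊗ₜ[k] u j) * g (Y i p ⊗ₜ[k] V' j q) * h' (y i ⊗ₜ[k] W' j q) :=
        sum4_comm _
    _ = ∑ j, ∑ q, ∑ i, ∑ p,
          f (x i ⊗ₜ[k] u j) * g (Y' i p ⊗ₜ[k] V' j q) * h' (Z' i p ⊗ₜ[k] W' j q) :=
        Finset.sum_congr rfl fun j _ => Finset.sum_congr rfl fun q _ =>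
          haco (u j) (V' j q) (W' j q)
    _ = ∑ i, ∑ p, ∑ j, ∑ q,
          f (x i ⊗ₜ[k] u j) * g (Y' i p ⊗ₜ[k] V' j q) * h' (Z' i p ⊗ₜ[k] W' j q) :=
        (sum4_comm _).symm
    _ = ∑ i, ∑ j, ∑ p, ∑ q,
          f (x i ⊗ₜ[k] u j) * g (Y' i p ⊗ₜ[k] V' j q) * h' (Z' i p ⊗ₜ[k] W' j q) :=
        Finset.sum_congr rfl fun i _ => Finset.sum_comm
    _ = ∑ i, ∑ j, f (x i ⊗ₜ[k] u j) * cv W g h' (y i ⊗ₜ[k] v j) := by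
        refine Finset.sum_congr rfl fun i _ => Finset.sum_congr rfl fun j _ => ?_
        rw [cv_tmul W g h' (hYZ i) (hVW j), Finset.mul_sum]
        refine Finset.sum_congr rfl fun p _ => ?_
        rw [Finset.mul_sum]
        exact Finset.sum_congr rfl fun q _ => (mul_assoc _ _ _)
    _ = cv W f (cv W g h') (a ⊗ₜ[k] b) := (cv_tmul W _ _ hxy huv).symm

/-- left multiplication by a fixed element commutes with convolution -/
lemma cv_mulLeft (f g : H ⊗[k] H →ₗ[k] A) (c : A) :
    cv W (LinearMap.mulLeft k c ∘ₗ f) g = LinearMap.mulLeft k c ∘ₗ cv W f g := by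
  apply TensorProduct.ext'
  intro a b
  obtain ⟨na, x, y, hxy⟩ := exists_rep (W.Δ a)
  obtain ⟨nb, u, v, huv⟩ := exists_rep (W.Δ b)
  rw [cv_tmul W _ _ hxy huv]
  simp only [LinearMap.comp_apply, LinearMap.mulLeft_apply, cv_tmul W f g hxy huv]
  simp only [Finset.mul_sum]
  exact Finset.sum_congr rfl fun i _ => Finset.sum_congr rfl fun j _ =>
    (mul_assoc _ _ _)

/-- right multiplication by a fixed element commutes with convolution -/
lemma cv_mulRight (f g : H ⊗[k] H →ₗ[k] A) (c : A) :
    cv W f (LinearMap.mulRight k c ∘ₗ g) = LinearMap.mulRight k c ∘ₗ cv W f g := by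
  apply TensorProduct.ext'
  intro a b
  obtain ⟨na, x, y, hxy⟩ := exists_rep (W.Δ a)
  obtain ⟨nb, u, v, huv⟩ := exists_rep (W.Δ b)
  rw [cv_tmul W _ _ hxy huv]
  simp only [LinearMap.comp_apply, LinearMap.mulRight_apply, cv_tmul W f g hxy huv]
  simp only [Finset.sum_mul]
  exact Finset.sum_congr rfl fun i _ => Finset.sum_congr rfl fun j _ =>
    (mul_assoc _ _ _).symm

end S13
namespace S13

open TensorProduct LinearMap

variable {k H A : Type*} [Field k] [Ring H] [Algebra k H] [Ring A] [Algebra k A]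
variable (W : WeakHopfData k H)

/-- trilinear map `(a,b,c) ↦ φ c • B a b` -/
noncomputable def sm3₃ {M : Type*} [AddCommMonoid M] [Module k M]
    (φ : H →ₗ[k] k) (B : H →ₗ[k] H →ₗ[k] M) : H →ₗ[k] H →ₗ[k] H →ₗ[k] M where
  toFun a := ((LinearMap.lsmul k M).comp φ).flip.comp (B a)
  map_add' a a' := by
    ext b c
    simp only [LinearMap.comp_apply, LinearMap.flip_apply, map_add,
      LinearMap.add_apply, LinearMap.lsmul_apply, smul_add]
  map_smul' r a := by
    ext b c
    simp only [LinearMap.comp_apply, LinearMap.flip_apply, map_smul,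
      LinearMap.smul_apply, LinearMap.lsmul_apply, RingHom.id_apply]
    try rw [smul_comm]

@[simp] lemma sm3₃_apply {M : Type*} [AddCommMonoid M] [Module k M]
    (φ : H →ₗ[k] k) (B : H →ₗ[k] H →ₗ[k] M) (a b c : H) :
    sm3₃ φ B a b c = φ c • B a b := rfl

lemma rep_eq' {M : Type*} [AddCommMonoid M] [Module k M]
    (B : H →ₗ[k] H →ₗ[k] M) {ι κ : Type*} [Fintype ι] [Fintype κ]
    {x y : ι → H} {p q : κ → H}
    (h : (∑ i, x i ⊗ₜ[k] y i : H ⊗[k] H) = ∑ j, p j ⊗ₜ[k] q j) :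
    ∑ i, B (x i) (y i) = ∑ j, B (p j) (q j) := by
  have := congrArg (TensorProduct.lift B) h
  simpa using this

section Reps

variable {ι' : Type*} [Fintype ι'] {u v : ι' → H}
  (hu : W.Δ 1 = ∑ j, u j ⊗ₜ[k] v j)

include hu in
lemma piL_rep (h : H) : piL W h = ∑ j, W.ε (u j * h) • v j := by
  unfold piL
  rw [hu, map_sum, map_sum]
  simp

include hu in
lemma piR_rep (h : H) : piR W h = ∑ j, W.ε (h * v j) • u j := by
  unfold piR
  rw [hu, map_sum, map_sum]
  simp

end Reps

section Counit

variable (hW : IsWeakHopf W)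

include hW in
/-- counit collapse on the left leg -/
lemma counit_rep_l {z : H} {ι : Type*} [Fintype ι] {x y : ι → H}
    (hz : W.Δ z = ∑ i, x i ⊗ₜ[k] y i) : ∑ i, W.ε (x i) • y i = z := by
  have := hW.counit_left z
  rw [hz, map_sum, map_sum] at this
  simpa using this

include hW in
/-- counit collapse on the right leg -/
lemma counit_rep_r {z : H} {ι : Type*} [Fintype ι] {x y : ι → H}
    (hz : W.Δ z = ∑ i, x i ⊗ₜ[k] y i) : ∑ i, W.ε (y i) • x i = z := by
  have := hW.counit_right z
  rw [hz, map_sum, map_sum] at this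
  simpa using this

end Counit

section WC

variable (hW : IsWeakHopf W) {m : ℕ} {u v : Fin m → H}
  (hu : W.Δ 1 = ∑ j, u j ⊗ₜ[k] v j)
  {M : Type*} [AddCommMonoid M] [Module k M]

include hW hu in
lemma wc_eval₁ (F : H →ₗ[k] H →ₗ[k] H →ₗ[k] M) :
    L3 F ((LinearMap.lTensor H W.Δ) (W.Δ 1)) =
      ∑ j, TensorProduct.lift (endApp F (v j)) (W.Δ (u j)) := by
  rw [← hW.coassoc 1]
  exact L3_eval₁ W F hu

include hu in
lemma wc_eval₂ (F : H →ₗ[k] H →ₗ[k] H →ₗ[k] M) :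
    L3 F ((LinearMap.lTensor H W.Δ) (W.Δ 1)) =
      ∑ j, TensorProduct.lift (F (u j)) (W.Δ (v j)) :=
  L3_eval₂ W F hu

include hW hu in
lemma wc₁_sum (F : H →ₗ[k] H →ₗ[k] H →ₗ[k] M) :
    L3 F ((LinearMap.lTensor H W.Δ) (W.Δ 1)) =
      ∑ j, ∑ j', F (u j) (v j * u j') (v j') := by
  rw [hW.weak_comul_one₁, hu]
  rw [TensorProduct.sum_tmul, map_sum, TensorProduct.tmul_sum,
    Finset.sum_mul_sum, map_sum]
  refine Finset.sum_congr rfl fun j _ => ?_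
  rw [map_sum]
  refine Finset.sum_congr rfl fun j' _ => ?_
  rw [TensorProduct.assoc_tmul, Algebra.TensorProduct.tmul_mul_tmul,
    Algebra.TensorProduct.tmul_mul_tmul]
  simp only [mul_one, one_mul]
  exact L3_tmul F _ _ _

include hW hu in
lemma wc₂_sum (F : H →ₗ[k] H →ₗ[k] H →ₗ[k] M) :
    L3 F ((LinearMap.lTensor H W.Δ) (W.Δ 1)) =
      ∑ j, ∑ j', F (u j) (u j' * v j) (v j') := by
  rw [hW.weak_comul_one₂, hu]
  rw [TensorProduct.sum_tmul, map_sum, TensorProduct.tmul_sum,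
    Finset.sum_mul_sum]
  rw [Finset.sum_comm, map_sum]
  refine Finset.sum_congr rfl fun j _ => ?_
  rw [map_sum]
  refine Finset.sum_congr rfl fun j' _ => ?_
  rw [TensorProduct.assoc_tmul, Algebra.TensorProduct.tmul_mul_tmul,
    Algebra.TensorProduct.tmul_mul_tmul]
  simp only [mul_one, one_mul]
  exact L3_tmul F _ _ _

end WC

section LiftHelpers

/-- `lift (blε ε β) t = β (counit-collapse t)` -/
lemma lift_blε {M : Type*} [AddCommMonoid M] [Module k M]
    (β : H →ₗ[k] M) (t : H ⊗[k] H) :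
    TensorProduct.lift (blε W.ε β) t =
      β ((TensorProduct.lid k H) ((LinearMap.rTensor H W.ε) t)) := by
  induction t using TensorProduct.induction_on with
  | zero => simp
  | tmul a b => simp
  | add s t hs ht => simp [hs, ht]

lemma lift_smul' {M : Type*} [AddCommMonoid M] [Module k M]
    (c : k) (B : H →ₗ[k] H →ₗ[k] M) (t : H ⊗[k] H) :
    TensorProduct.lift (c • B) t = c • TensorProduct.lift B t := by
  induction t using TensorProduct.induction_on with
  | zero => simp
  | tmul a b => simp
  | add s t hs ht => rw [map_add, map_add, hs, ht, smul_add]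

lemma lift_mk (t : H ⊗[k] H) :
    TensorProduct.lift (TensorProduct.mk k H H) t = t := by
  induction t using TensorProduct.induction_on with
  | zero => simp
  | tmul a b => simp
  | add s t hs ht => simp [hs, ht]

end LiftHelpers

section Struct

variable (hW : IsWeakHopf W) {m : ℕ} {u v : Fin m → H}
  (hu : W.Δ 1 = ∑ j, u j ⊗ₜ[k] v j)

include hW hu in
/-- `Σ 1⁽¹⁾ ⊗ Π^L(1⁽²⁾) = Δ1` -/
lemma projL_one : ∑ j, u j ⊗ₜ[k] piL W (v j) = W.Δ 1 := by
  have key := wc₂_sum W hW hu (sm3₂ W.ε (TensorProduct.mk k H H))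
  have e2 := wc_eval₂ W hu (sm3₂ W.ε (TensorProduct.mk k H H))
  have expand : ∑ j, u j ⊗ₜ[k] piL W (v j)
      = ∑ j, ∑ j', (sm3₂ W.ε (TensorProduct.mk k H H)) (u j) (u j' * v j) (v j') := by
    refine Finset.sum_congr rfl fun j _ => ?_
    rw [piL_rep W hu (v j), TensorProduct.tmul_sum]
    exact Finset.sum_congr rfl fun j' _ => by rw [TensorProduct.tmul_smul]; rfl
  rw [expand, ← key, e2]
  have coll : ∀ j, TensorProduct.lift ((sm3₂ W.ε (TensorProduct.mk k H H)) (u j))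
      (W.Δ (v j)) = u j ⊗ₜ[k] v j := by
    intro j
    have hF : (sm3₂ W.ε (TensorProduct.mk k H H)) (u j)
        = blε W.ε (tml k H (u j)) := by ext b c; rfl
    rw [hF, lift_blε, hW.counit_left]; rfl
  exact (Finset.sum_congr rfl fun j _ => coll j).trans hu.symm

include hW hu in
/-- `Σ Π^R(1⁽¹⁾) ⊗ 1⁽²⁾ = Δ1` -/
lemma projR_one : ∑ j, piR W (u j) ⊗ₜ[k] v j = W.Δ 1 := by
  have key := wc₂_sum W hW hu (sm3₂ W.ε (TensorProduct.mk k H H))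
  have e2 := wc_eval₂ W hu (sm3₂ W.ε (TensorProduct.mk k H H))
  have expand : ∑ j, piR W (u j) ⊗ₜ[k] v j
      = ∑ j, ∑ j', (sm3₂ W.ε (TensorProduct.mk k H H)) (u j) (u j' * v j) (v j') := by
    rw [Finset.sum_comm]
    refine Finset.sum_congr rfl fun j _ => ?_
    rw [piR_rep W hu (u j), TensorProduct.sum_tmul]
    refine Finset.sum_congr rfl fun j' _ => ?_
    rfl
  rw [expand, ← key, e2]
  have coll : ∀ j, TensorProduct.lift ((sm3₂ W.ε (TensorProduct.mk k H H)) (u j))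
      (W.Δ (v j)) = u j ⊗ₜ[k] v j := by
    intro j
    have hF : (sm3₂ W.ε (TensorProduct.mk k H H)) (u j)
        = blε W.ε (tml k H (u j)) := by ext b c; rfl
    rw [hF, lift_blε, hW.counit_left]; rfl
  exact (Finset.sum_congr rfl fun j _ => coll j).trans hu.symm

include hW hu in
/-- rewrite a `Δ1`-representation through the projections -/
lemma projSum {M : Type*} [AddCommMonoid M] [Module k M]
    (B : H →ₗ[k] H →ₗ[k] M) :
    ∑ j, B (u j) (v j) = ∑ j, B (piR W (u j)) (piL W (v j)) := by
  have h1 : W.Δ 1 = ∑ j, piR W (u j) ⊗ₜ[k] v j := (projR_one W hW hu).symm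
  have h2 : ∑ j, piR W (u j) ⊗ₜ[k] piL W (v j) = W.Δ 1 :=
    projL_one W hW h1
  rw [rep_sum B hu, rep_sum B h2.symm]

include hW hu in
/-- the commutation `Π^L(x) Π^R(y) = Π^R(y) Π^L(x)` -/
lemma piLR_comm (x y : H) : piL W x * piR W y = piR W y * piL W x := by
  have k₁ := wc₁_sum W hW hu
    (sm3₁₃ (W.ε ∘ₗ LinearMap.mulRight k x) (W.ε ∘ₗ LinearMap.mulLeft k y)
      LinearMap.id)
  have k₂ := wc₂_sum W hW hu
    (sm3₁₃ (W.ε ∘ₗ LinearMap.mulRight k x) (W.ε ∘ₗ LinearMap.mulLeft k y)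
      LinearMap.id)
  have e₁ : piL W x * piR W y = ∑ j, ∑ j',
      (sm3₁₃ (W.ε ∘ₗ LinearMap.mulRight k x) (W.ε ∘ₗ LinearMap.mulLeft k y)
        LinearMap.id) (u j) (v j * u j') (v j') := by
    rw [piL_rep W hu x, piR_rep W hu y, Finset.sum_mul_sum]
    refine Finset.sum_congr rfl fun j _ => Finset.sum_congr rfl fun j' _ => ?_
    simp only [sm3₁₃_apply, LinearMap.comp_apply, LinearMap.mulRight_apply,
      LinearMap.mulLeft_apply, LinearMap.id_apply, smul_mul_assoc,
      mul_smul_comm]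
    exact smul_comm _ _ _
  have e₂ : piR W y * piL W x = ∑ j, ∑ j',
      (sm3₁₃ (W.ε ∘ₗ LinearMap.mulRight k x) (W.ε ∘ₗ LinearMap.mulLeft k y)
        LinearMap.id) (u j) (u j' * v j) (v j') := by
    rw [piL_rep W hu x, piR_rep W hu y, Finset.sum_mul_sum, Finset.sum_comm]
    refine Finset.sum_congr rfl fun j _ => Finset.sum_congr rfl fun j' _ => ?_
    simp only [sm3₁₃_apply, LinearMap.comp_apply, LinearMap.mulRight_apply,
      LinearMap.mulLeft_apply, LinearMap.id_apply]
    rw [smul_mul_assoc, mul_smul_comm]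
    rw [smul_comm]
  rw [e₁, e₂, ← k₁, ← k₂]

end Struct

end S13
namespace S13

open TensorProduct LinearMap

variable {k H A : Type*} [Field k] [Ring H] [Algebra k H] [Ring A] [Algebra k A]
variable (W : WeakHopfData k H)

section Struct2

variable (hW : IsWeakHopf W) {m : ℕ} {u v : Fin m → H}
  (hu : W.Δ 1 = ∑ j, u j ⊗ₜ[k] v j)

include hW hu in
/-- `ε(h Π^L(m)) = ε(h m)` -/
lemma eps_piL (h m' : H) : W.ε (h * piL W m') = W.ε (h * m') := by
  have wc := (hW.weak_counit h 1 m' m u v hu).2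
  rw [mul_one] at wc
  rw [piL_rep W hu m', Finset.mul_sum, map_sum, wc]
  refine Finset.sum_congr rfl fun j _ => ?_
  rw [mul_smul_comm, map_smul]
  simp [smul_eq_mul, mul_comm]

include hW hu in
lemma piL_idem (m' : H) : piL W (piL W m') = piL W m' := by
  calc piL W (piL W m') = ∑ j, W.ε (u j * piL W m') • v j := piL_rep W hu _
    _ = ∑ j, W.ε (u j * m') • v j :=
        Finset.sum_congr rfl fun j _ => by rw [eps_piL W hW hu]
    _ = piL W m' := (piL_rep W hu m').symm

include hW hu in
lemma piL_mul_piL (z y : H) : piL W (z * piL W y) = piL W (z * y) := by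
  calc piL W (z * piL W y) = ∑ j, W.ε (u j * (z * piL W y)) • v j := piL_rep W hu _
    _ = ∑ j, W.ε (u j * (z * y)) • v j := by
        refine Finset.sum_congr rfl fun j _ => ?_
        rw [← mul_assoc, eps_piL W hW hu, mul_assoc]
    _ = piL W (z * y) := (piL_rep W hu _).symm

include hW hu in
/-- `Δ(Π^L m) = Σ (1⁽¹⁾ Π^L m) ⊗ 1⁽²⁾` -/
lemma comul_piL (m' : H) :
    W.Δ (piL W m') = ∑ j, (u j * piL W m') ⊗ₜ[k] v j := by
  have key := wc₂_sum W hW hu (sm3₁ (W.ε ∘ₗ LinearMap.mulRight k m')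
    (TensorProduct.mk k H H))
  have e1 : L3 (sm3₁ (W.ε ∘ₗ LinearMap.mulRight k m') (TensorProduct.mk k H H))
      ((LinearMap.lTensor H W.Δ) (W.Δ 1)) = W.Δ (piL W m') := by
    rw [wc_eval₂ W hu, piL_rep W hu m', map_sum]
    refine Finset.sum_congr rfl fun j _ => ?_
    have hF : (sm3₁ (W.ε ∘ₗ LinearMap.mulRight k m') (TensorProduct.mk k H H))
        (u j) = W.ε (u j * m') • TensorProduct.mk k H H := rfl
    rw [hF, lift_smul', lift_mk, map_smul]
  rw [← e1, key, Finset.sum_comm]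
  refine Finset.sum_congr rfl fun j' _ => ?_
  rw [piL_rep W hu m', Finset.mul_sum, TensorProduct.sum_tmul]
  refine Finset.sum_congr rfl fun j _ => ?_
  rw [mul_smul_comm, ← TensorProduct.smul_tmul']
  rfl

include hW hu in
/-- `Δ(Π^R m) = Σ 1⁽¹⁾ ⊗ (Π^R m 1⁽²⁾)` -/
lemma comul_piR (m' : H) :
    W.Δ (piR W m') = ∑ j, u j ⊗ₜ[k] (piR W m' * v j) := by
  have key := wc₂_sum W hW hu (sm3₃ (W.ε ∘ₗ LinearMap.mulLeft k m')
    (TensorProduct.mk k H H))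
  have e1 : L3 (sm3₃ (W.ε ∘ₗ LinearMap.mulLeft k m') (TensorProduct.mk k H H))
      ((LinearMap.lTensor H W.Δ) (W.Δ 1)) = W.Δ (piR W m') := by
    rw [wc_eval₁ W hW hu, piR_rep W hu m', map_sum]
    refine Finset.sum_congr rfl fun j _ => ?_
    have hF : endApp (sm3₃ (W.ε ∘ₗ LinearMap.mulLeft k m') (TensorProduct.mk k H H))
        (v j) = W.ε (m' * v j) • TensorProduct.mk k H H := by
      ext a b; rfl
    rw [hF, lift_smul', lift_mk, map_smul]
  rw [← e1, key]
  refine Finset.sum_congr rfl fun j _ => ?_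
  rw [piR_rep W hu m', Finset.sum_mul, TensorProduct.tmul_sum]
  refine Finset.sum_congr rfl fun j' _ => ?_
  rw [smul_mul_assoc, TensorProduct.tmul_smul]
  rfl

include hW hu in
/-- `Δ(Π^L m) = Σ (Π^L m 1⁽¹⁾) ⊗ 1⁽²⁾` -/
lemma comul_piL' (m' : H) :
    W.Δ (piL W m') = ∑ j, (piL W m' * u j) ⊗ₜ[k] v j := by
  rw [comul_piL W hW hu m']
  calc ∑ j, (u j * piL W m') ⊗ₜ[k] v j
      = ∑ j, ((TensorProduct.mk k H H).comp
          (LinearMap.mulRight k (piL W m'))) (u j) (v j) := rfl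
    _ = ∑ j, ((TensorProduct.mk k H H).comp
          (LinearMap.mulRight k (piL W m'))) (piR W (u j)) (piL W (v j)) :=
        projSum W hW hu _
    _ = ∑ j, ((TensorProduct.mk k H H).comp
          (LinearMap.mulLeft k (piL W m'))) (piR W (u j)) (piL W (v j)) := by
        refine Finset.sum_congr rfl fun j _ => ?_
        simp only [LinearMap.comp_apply, LinearMap.mulRight_apply,
          LinearMap.mulLeft_apply]
        rw [← piLR_comm W hW hu]
    _ = ∑ j, ((TensorProduct.mk k H H).comp
          (LinearMap.mulLeft k (piL W m'))) (u j) (v j) :=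
        (projSum W hW hu _).symm
    _ = ∑ j, (piL W m' * u j) ⊗ₜ[k] v j := rfl

include hW hu in
/-- `Σ h⁽¹⁾ ⊗ Π^L(h⁽²⁾) = Σ (1⁽¹⁾ h) ⊗ 1⁽²⁾` -/
lemma F3L {h : H} {ι : Type*} [Fintype ι] {x y : ι → H}
    (hxy : W.Δ h = ∑ i, x i ⊗ₜ[k] y i) :
    ∑ i, x i ⊗ₜ[k] piL W (y i) = ∑ j, (u j * h) ⊗ₜ[k] v j := by
  choose na a b hab using fun j => exists_rep (W.Δ (u j))
  set B : H →ₗ[k] H →ₗ[k] H ⊗[k] H :=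
    ∑ j'', (blε (W.ε ∘ₗ LinearMap.mulLeft k (u j'')) (tmr k H (v j''))).flip
    with hB
  have Bapp : ∀ a' b', B a' b' = ∑ j'', W.ε (u j'' * b') • (a' ⊗ₜ[k] v j'') := by
    intro a' b'
    rw [hB]
    simp [LinearMap.sum_apply]
  set F : ι → (H →ₗ[k] H →ₗ[k] H →ₗ[k] H ⊗[k] H) := fun i =>
    sm3₂ (W.ε ∘ₗ LinearMap.mulRight k (y i))
      ((TensorProduct.mk k H H).comp (LinearMap.mulRight k (x i))) with hF
  have Fapp : ∀ i a' b' c', F i a' b' c' = W.ε (b' * y i) • ((a' * x i) ⊗ₜ[k] c') := by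
    intro i a' b' c'; rw [hF]; rfl
  calc ∑ i, x i ⊗ₜ[k] piL W (y i)
      = ∑ i, B (x i) (y i) := by
        refine Finset.sum_congr rfl fun i _ => ?_
        rw [Bapp, piL_rep W hu (y i), TensorProduct.tmul_sum]
        exact Finset.sum_congr rfl fun j _ => by rw [TensorProduct.tmul_smul]
    _ = ∑ p : Fin m × ι, B (u p.1 * x p.2) (v p.1 * y p.2) :=
        rep_eq B hxy (rep_one_mul W hW hxy hu)
    _ = ∑ i, ∑ j, ∑ j'', F i (u j) (u j'' * v j) (v j'') := by
        rw [Fintype.sum_prod_type, Finset.sum_comm]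
        refine Finset.sum_congr rfl fun i _ => Finset.sum_congr rfl fun j _ => ?_
        rw [Bapp]
        refine Finset.sum_congr rfl fun j'' _ => ?_
        rw [Fapp, ← mul_assoc]
    _ = ∑ i, L3 (F i) ((LinearMap.lTensor H W.Δ) (W.Δ 1)) := by
        refine Finset.sum_congr rfl fun i _ => ?_
        rw [wc₂_sum W hW hu (F i)]
    _ = ∑ i, ∑ j, ∑ p, F i (a j p) (b j p) (v j) := by
        refine Finset.sum_congr rfl fun i _ => ?_
        rw [wc_eval₁ W hW hu (F i)]
        refine Finset.sum_congr rfl fun j _ => ?_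
        rw [← rep_sum (endApp (F i) (v j)) (hab j)]
        rfl
    _ = ∑ j, ∑ i, ∑ p, F i (a j p) (b j p) (v j) := Finset.sum_comm
    _ = ∑ j, (u j * h) ⊗ₜ[k] v j := by
        refine Finset.sum_congr rfl fun j _ => ?_
        have hrep : W.Δ (u j * h) =
            ∑ p : Fin (na j) × ι, (a j p.1 * x p.2) ⊗ₜ[k] (b j p.1 * y p.2) :=
          rep_mul W hW (hab j) hxy
        have coll := counit_rep_r W hW hrep
        calc ∑ i, ∑ p, F i (a j p) (b j p) (v j)
            = ∑ p, ∑ i, W.ε (b j p * y i) • ((a j p * x i) ⊗ₜ[k] v j) := by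
              rw [Finset.sum_comm]
              exact Finset.sum_congr rfl fun p _ =>
                Finset.sum_congr rfl fun i _ => Fapp i _ _ _
          _ = tmr k H (v j) (∑ p : Fin (na j) × ι,
                W.ε (b j p.1 * y p.2) • (a j p.1 * x p.2)) := by
              rw [map_sum, Fintype.sum_prod_type]
              refine Finset.sum_congr rfl fun p _ =>
                Finset.sum_congr rfl fun i _ => ?_
              rw [map_smul]
              rfl
          _ = (u j * h) ⊗ₜ[k] v j := by rw [coll]; rfl

include hW hu in
/-- `Σ Π^R(h⁽¹⁾) ⊗ h⁽²⁾ = Σ 1⁽¹⁾ ⊗ (h 1⁽²⁾)` -/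
lemma F3R {h : H} {ι : Type*} [Fintype ι] {x y : ι → H}
    (hxy : W.Δ h = ∑ i, x i ⊗ₜ[k] y i) :
    ∑ i, piR W (x i) ⊗ₜ[k] y i = ∑ j, u j ⊗ₜ[k] (h * v j) := by
  choose na a b hab using fun j => exists_rep (W.Δ (v j))
  set B : H →ₗ[k] H →ₗ[k] H ⊗[k] H :=
    ∑ j'', blε (W.ε ∘ₗ LinearMap.mulRight k (v j'')) (tml k H (u j''))
    with hB
  have Bapp : ∀ a' b', B a' b' = ∑ j'', W.ε (a' * v j'') • (u j'' ⊗ₜ[k] b') := by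
    intro a' b'
    rw [hB]
    simp [LinearMap.sum_apply]
  set F : ι → (H →ₗ[k] H →ₗ[k] H →ₗ[k] H ⊗[k] H) := fun i =>
    sm3₂ (W.ε ∘ₗ LinearMap.mulLeft k (x i))
      ((TensorProduct.mk k H H).compl₂ (LinearMap.mulLeft k (y i))) with hF
  have Fapp : ∀ i a' b' c', F i a' b' c' = W.ε (x i * b') • (a' ⊗ₜ[k] (y i * c')) := by
    intro i a' b' c'; rw [hF]; rfl
  calc ∑ i, piR W (x i) ⊗ₜ[k] y i
      = ∑ i, B (x i) (y i) := by
        refine Finset.sum_congr rfl fun i _ => ?_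
        rw [Bapp, piR_rep W hu (x i), TensorProduct.sum_tmul]
        exact Finset.sum_congr rfl fun j _ => by
          rw [← TensorProduct.smul_tmul']
    _ = ∑ p : ι × Fin m, B (x p.1 * u p.2) (y p.1 * v p.2) :=
        rep_eq B hxy (rep_mul_one W hW hxy hu)
    _ = ∑ i, ∑ j, ∑ j'', F i (u j'') (u j * v j'') (v j) := by
        rw [Fintype.sum_prod_type]
        refine Finset.sum_congr rfl fun i _ => Finset.sum_congr rfl fun j _ => ?_
        rw [Bapp]
        refine Finset.sum_congr rfl fun j'' _ => ?_
        rw [Fapp, ← mul_assoc]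
    _ = ∑ i, ∑ j, ∑ j', F i (u j) (u j' * v j) (v j') := by
        exact Finset.sum_congr rfl fun i _ => Finset.sum_comm
    _ = ∑ i, L3 (F i) ((LinearMap.lTensor H W.Δ) (W.Δ 1)) := by
        refine Finset.sum_congr rfl fun i _ => ?_
        rw [wc₂_sum W hW hu (F i)]
    _ = ∑ i, ∑ j, ∑ p, F i (u j) (a j p) (b j p) := by
        refine Finset.sum_congr rfl fun i _ => ?_
        rw [wc_eval₂ W hu (F i)]
        refine Finset.sum_congr rfl fun j _ => ?_
        rw [← rep_sum (F i (u j)) (hab j)]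
    _ = ∑ j, ∑ i, ∑ p, F i (u j) (a j p) (b j p) := Finset.sum_comm
    _ = ∑ j, u j ⊗ₜ[k] (h * v j) := by
        refine Finset.sum_congr rfl fun j _ => ?_
        have hrep : W.Δ (h * v j) =
            ∑ p : ι × Fin (na j), (x p.1 * a j p.2) ⊗ₜ[k] (y p.1 * b j p.2) :=
          rep_mul W hW hxy (hab j)
        have coll := counit_rep_l W hW hrep
        calc ∑ i, ∑ p, F i (u j) (a j p) (b j p)
            = tml k H (u j) (∑ p : ι × Fin (na j),
                W.ε (x p.1 * a j p.2) • (y p.1 * b j p.2)) := by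
              rw [map_sum, Fintype.sum_prod_type]
              refine Finset.sum_congr rfl fun i _ =>
                Finset.sum_congr rfl fun p _ => ?_
              rw [Fapp, map_smul]
              rfl
          _ = u j ⊗ₜ[k] (h * v j) := by rw [coll]; rfl

end Struct2

end S13
namespace S13

open TensorProduct LinearMap

variable {k H A : Type*} [Field k] [Ring H] [Algebra k H] [Ring A] [Algebra k A]
variable (W : WeakHopfData k H)

section Antipode

variable (hW : IsWeakHopf W) {m : ℕ} {u v : Fin m → H}
  (hu : W.Δ 1 = ∑ j, u j ⊗ₜ[k] v j)

include hW in
/-- `S h = Σ Π^R(h⁽¹⁾) S(h⁽²⁾)` -/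
lemma A4 {h : H} {n : ℕ} {x y : Fin n → H}
    (hxy : W.Δ h = ∑ i, x i ⊗ₜ[k] y i) :
    ∑ i, piR W (x i) * W.S (y i) = W.S h := by
  choose na a b hab using fun i => exists_rep (W.Δ (x i))
  choose nc c d hcd using fun i => exists_rep (W.Δ (y i))
  have mid := hW.antipode_mid h n x y hxy nc c d hcd
  calc ∑ i, piR W (x i) * W.S (y i)
      = ∑ i, ∑ p, W.S (a i p) * b i p * W.S (y i) := by
        refine Finset.sum_congr rfl fun i _ => ?_
        rw [← hW.antipode_right (x i) (na i) (a i) (b i) (hab i),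
          Finset.sum_mul]
    _ = ∑ i, ∑ p, W.S (x i) * c i p * W.S (d i p) := by
        have := co_sum W hW (tr W.S LinearMap.id W.S) hxy hab hcd
        simpa using this
    _ = W.S h := mid

include hW in
/-- `S h = Σ S(h⁽¹⁾) Π^L(h⁽²⁾)` -/
lemma A5 {h : H} {n : ℕ} {x y : Fin n → H}
    (hxy : W.Δ h = ∑ i, x i ⊗ₜ[k] y i) :
    ∑ i, W.S (x i) * piL W (y i) = W.S h := by
  choose nc c d hcd using fun i => exists_rep (W.Δ (y i))
  have mid := hW.antipode_mid h n x y hxy nc c d hcd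
  calc ∑ i, W.S (x i) * piL W (y i)
      = ∑ i, ∑ p, W.S (x i) * c i p * W.S (d i p) := by
        refine Finset.sum_congr rfl fun i _ => ?_
        rw [← hW.antipode_left (y i) (nc i) (c i) (d i) (hcd i),
          Finset.mul_sum]
        exact Finset.sum_congr rfl fun p _ => (mul_assoc _ _ _).symm
    _ = W.S h := mid

include hW hu in
/-- `Σ 1⁽¹⁾ S(z 1⁽²⁾) = S z` -/
lemma K3 (z : H) : ∑ j, u j * W.S (z * v j) = W.S z := by
  obtain ⟨n, x, y, hxy⟩ := exists_rep (W.Δ z)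
  have f3r := F3R W hW hu hxy
  have e := rep_eq' (bl (LinearMap.id) W.S : H →ₗ[k] H →ₗ[k] H) f3r
  simp only [bl_apply, LinearMap.id_apply] at e
  rw [← e, A4 W hW hxy]

include hW hu in
/-- `S(Π^R y) = Π^L(Π^R y)` -/
lemma S_piR (y' : H) : W.S (piR W y') = piL W (piR W y') := by
  have f4r := comul_piR W hW hu y'
  have al := hW.antipode_left (piR W y') m u (fun j => piR W y' * v j) f4r
  exact (K3 W hW hu (piR W y')).symm.trans al

include hW hu in
/-- `Π^L(S h) = Π^L(Π^R h)` -/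
lemma piL_S (h : H) : piL W (W.S h) = piL W (piR W h) := by
  obtain ⟨n, x, y, hxy⟩ := exists_rep (W.Δ h)
  have a5 := A5 W hW hxy
  have a2 := hW.antipode_right h n x y hxy
  calc piL W (W.S h) = ∑ j, W.ε (u j * W.S h) • v j := piL_rep W hu _
    _ = ∑ j, W.ε (u j * piR W h) • v j := by
        refine Finset.sum_congr rfl fun j _ => ?_
        congr 1
        rw [← a5, ← a2, Finset.mul_sum, Finset.mul_sum, map_sum, map_sum]
        refine Finset.sum_congr rfl fun i _ => ?_
        rw [← mul_assoc, eps_piL W hW hu, mul_assoc]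
    _ = piL W (piR W h) := (piL_rep W hu _).symm

include hW in
lemma S_inj : Function.Injective W.S := fun a b hab => by
  rw [← hW.Sinv_S a, ← hW.Sinv_S b, hab]

include hW hu in
/-- `Π^R(S⁻¹ l) = S⁻¹ l` for `l ∈ H^L` -/
lemma GA (m' : H) : piR W (W.Sinv (piL W m')) = W.Sinv (piL W m') := by
  apply S_inj W hW
  rw [S_piR W hW hu, ← piL_S W hW hu, hW.S_Sinv, piL_idem W hW hu]

include hW hu in
/-- `Π^L(S⁻¹ l) = l` for `l ∈ H^L` -/
lemma piL_Sinv (m' : H) : piL W (W.Sinv (piL W m')) = piL W m' := by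
  conv_lhs => rw [← GA W hW hu m']
  rw [← piL_S W hW hu, hW.S_Sinv, piL_idem W hW hu]

end Antipode

end S13
namespace S13

open TensorProduct LinearMap

variable {k H A : Type*} [Field k] [Ring H] [Algebra k H] [Ring A] [Algebra k A]
variable (W : WeakHopfData k H)

lemma rep_eq₂ {M₁ M₂ M : Type*} [AddCommMonoid M₁] [Module k M₁]
    [AddCommMonoid M₂] [Module k M₂] [AddCommMonoid M] [Module k M]
    (B : M₁ →ₗ[k] M₂ →ₗ[k] M) {ι κ : Type*} [Fintype ι] [Fintype κ]
    {x : ι → M₁} {y : ι → M₂} {p : κ → M₁} {q : κ → M₂}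
    (h : (∑ i, x i ⊗ₜ[k] y i : M₁ ⊗[k] M₂) = ∑ j, p j ⊗ₜ[k] q j) :
    ∑ i, B (x i) (y i) = ∑ j, B (p j) (q j) := by
  have := congrArg (TensorProduct.lift B) h
  simpa using this

variable (k) in
/-- `Π^L` as a linear map -/
noncomputable def piLmap : H →ₗ[k] H where
  toFun := piL W
  map_add' a b := by
    show piL W (a + b) = piL W a + piL W b
    obtain ⟨n, u, v, hu⟩ := exists_rep (W.Δ 1)
    rw [piL_rep W hu, piL_rep W hu, piL_rep W hu, ← Finset.sum_add_distrib]
    refine Finset.sum_congr rfl fun j _ => ?_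
    rw [mul_add, map_add, add_smul]
  map_smul' r a := by
    show piL W (r • a) = r • piL W a
    obtain ⟨n, u, v, hu⟩ := exists_rep (W.Δ 1)
    rw [piL_rep W hu, piL_rep W hu, Finset.smul_sum]
    refine Finset.sum_congr rfl fun j _ => ?_
    rw [mul_smul_comm, map_smul, smul_eq_mul, mul_smul]

@[simp] lemma piLmap_apply (h : H) : piLmap k W h = piL W h := rfl

section Act

variable (hW : IsWeakHopf W) (ρ : H →ₗ[k] A →ₗ[k] A)
variable {m : ℕ} {u v : Fin m → H} (hu : W.Δ 1 = ∑ j, u j ⊗ₜ[k] v j)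

/-- `cond2` for arbitrary finite index types -/
lemma c2' (h2 : cond2 W ρ) {h : H} (a a' : A) {ι : Type*} [Fintype ι]
    {x y : ι → H} (hxy : W.Δ h = ∑ i, x i ⊗ₜ[k] y i) :
    ρ h (a * a') = ∑ i, ρ (x i) a * ρ (y i) a' := by
  let e := Fintype.equivFin ι
  have hrep : W.Δ h = ∑ i : Fin (Fintype.card ι),
      (x ∘ e.symm) i ⊗ₜ[k] (y ∘ e.symm) i := by
    rw [hxy]
    exact (Fintype.sum_equiv e.symm _ _ fun i => rfl).symm
  rw [h2 h a a' (Fintype.card ι) (x ∘ e.symm) (y ∘ e.symm) hrep]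
  exact Fintype.sum_equiv e.symm _ _ fun i => rfl

include hu in
/-- `Σ (1⁽¹⁾·1)(1⁽²⁾·b) = b` -/
lemma act_E1 (h2 : cond2 W ρ) (h4 : cond4 ρ) (b : A) :
    ∑ j, ρ (u j) 1 * ρ (v j) b = b := by
  have := c2' W ρ h2 1 b hu
  rw [one_mul, h4 b] at this
  exact this.symm

include hu in
/-- move `(1⁽¹⁾·a)` across via cond22 inside arbitrary bilinear sums -/
lemma h22_sum (h22 : cond22 W ρ) {M : Type*} [AddCommMonoid M] [Module k M]
    (B : A →ₗ[k] H →ₗ[k] M) (a : A) :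
    ∑ j, B (ρ (u j) a) (v j) = ∑ j, B (a * ρ (u j) 1) (v j) :=
  rep_eq₂ B (h22 a m u v hu).symm

include hW hu in
/-- (R1): `Π^L(m)·a = (Π^L(m)·1) a` -/
lemma act_piL (h2 : cond2 W ρ) (h4 : cond4 ρ) (h11 : cond11 ρ)
    (h22 : cond22 W ρ) (m' : H) (a : A) :
    ρ (piL W m') a = ρ (piL W m') 1 * a := by
  set l := piL W m' with hl
  calc ρ l a = ρ l (1 * a) := by rw [one_mul]
    _ = ∑ j, ρ (u j * l) 1 * ρ (v j) a := c2' W ρ h2 1 a (comul_piL W hW hu m')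
    _ = ∑ j, ρ (u j) (ρ l 1) * ρ (v j) a := by
        refine Finset.sum_congr rfl fun j _ => ?_
        rw [h11]
    _ = ∑ j, (ρ l 1 * ρ (u j) 1) * ρ (v j) a := by
        exact h22_sum W ρ hu h22 (bl LinearMap.id (ρ.flip a)) (ρ l 1)
    _ = ρ l 1 * ∑ j, ρ (u j) 1 * ρ (v j) a := by
        rw [Finset.mul_sum]
        exact Finset.sum_congr rfl fun j _ => mul_assoc _ _ _
    _ = ρ l 1 * a := by rw [act_E1 W ρ hu h2 h4 a]

include hu in
/-- (R2'): `a (Π^R(y)·1) = Π^R(y)·a` -/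
lemma act_piR (h22 : cond22 W ρ) (y' : H) (a : A) :
    a * ρ (piR W y') 1 = ρ (piR W y') a := by
  have e1 : a * ρ (piR W y') 1 = ∑ j, W.ε (y' * v j) • (a * ρ (u j) 1) := by
    rw [piR_rep W hu y', map_sum, LinearMap.sum_apply, Finset.mul_sum]
    refine Finset.sum_congr rfl fun j _ => ?_
    rw [map_smul, LinearMap.smul_apply, mul_smul_comm]
  have e2 : ρ (piR W y') a = ∑ j, W.ε (y' * v j) • ρ (u j) a := by
    rw [piR_rep W hu y', map_sum, LinearMap.sum_apply]
    refine Finset.sum_congr rfl fun j _ => ?_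
    rw [map_smul, LinearMap.smul_apply]
  rw [e1, e2]
  have hmove := rep_eq₂ ((blε (W.ε ∘ₗ LinearMap.mulLeft k y')
    (LinearMap.id : A →ₗ[k] A)).flip) (h22 a m u v hu)
  simpa using hmove

include hW hu in
/-- `(Π^L(m) w)·1 = (Π^L(m)·1)(w·1)` -/
lemma piL_mul_act (h2 : cond2 W ρ) (h4 : cond4 ρ) (h11 : cond11 ρ)
    (h22 : cond22 W ρ) (m' w : H) :
    ρ (piL W m' * w) 1 = ρ (piL W m') 1 * ρ w 1 := by
  rw [← h11, act_piL W hW ρ hu h2 h4 h11 h22]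

include hW hu in
/-- helper: two bilinear maps agreeing on projected legs give equal sums -/
lemma projSum₂ {M : Type*} [AddCommMonoid M] [Module k M]
    (B₁ B₂ : H →ₗ[k] H →ₗ[k] M)
    (hpt : ∀ j, B₁ (piR W (u j)) (piL W (v j)) = B₂ (piR W (u j)) (piL W (v j))) :
    ∑ j, B₁ (u j) (v j) = ∑ j, B₂ (u j) (v j) := by
  rw [projSum W hW hu B₁, projSum W hW hu B₂]
  exact Finset.sum_congr rfl fun j _ => hpt j

include hW hu in
/-- (Y2H): `Π^L(x) Π^L(y) = Π^L(Π^L(x) y)` -/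
lemma piL_piL_mul (x' y' : H) :
    piL W x' * piL W y' = piL W (piL W x' * y') := by
  have hz : W.Δ (piL W x' * piL W y') =
      ∑ p : Fin m × Fin m, (u p.1 * piL W x' * (u p.2 * piL W y')) ⊗ₜ[k]
        (v p.1 * v p.2) := by
    have := rep_mul W hW (comul_piL W hW hu x') (comul_piL W hW hu y')
    simpa using this
  have coll := counit_rep_l W hW hz
  -- move `piL x'` across `u p.2`
  have move : ∀ j : Fin m,
      (∑ j', W.ε (u j * piL W x' * (u j' * piL W y')) • (v j * v j')) =
      ∑ j', W.ε (u j * (u j' * (piL W x' * piL W y'))) • (v j * v j') := by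
    intro j
    refine projSum₂ W hW hu
      (blε (W.ε ∘ₗ LinearMap.mulLeft k (u j * piL W x') ∘ₗ
          LinearMap.mulRight k (piL W y'))
        ((LinearMap.mulLeft k (v j))))
      (blε (W.ε ∘ₗ LinearMap.mulLeft k (u j) ∘ₗ
          LinearMap.mulRight k (piL W x' * piL W y'))
        ((LinearMap.mulLeft k (v j)))) (fun j' => ?_)
    simp only [blε_apply, LinearMap.comp_apply, LinearMap.mulLeft_apply,
      LinearMap.mulRight_apply]
    congr 2
    calc u j * piL W x' * (piR W (u j') * piL W y')
        = u j * (piL W x' * piR W (u j') * piL W y') := by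
          rw [mul_assoc, ← mul_assoc (piL W x')]
      _ = u j * (piR W (u j') * (piL W x' * piL W y')) := by
          rw [piLR_comm W hW hu, mul_assoc]
  calc piL W x' * piL W y'
      = ∑ p : Fin m × Fin m, W.ε (u p.1 * piL W x' * (u p.2 * piL W y')) •
          (v p.1 * v p.2) := coll.symm
    _ = ∑ j, ∑ j', W.ε (u j * (u j' * (piL W x' * piL W y'))) • (v j * v j') := by
        rw [Fintype.sum_prod_type]
        exact Finset.sum_congr rfl fun j _ => move j
    _ = ∑ p : Fin m × Fin m, W.ε ((u p.1 * u p.2) * (piL W x' * piL W y')) •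
          (v p.1 * v p.2) := by
        rw [Fintype.sum_prod_type]
        refine Finset.sum_congr rfl fun j _ => Finset.sum_congr rfl fun j' _ => ?_
        rw [mul_assoc]
    _ = piL W (piL W x' * piL W y') := by
        have hone : W.Δ 1 = ∑ p : Fin m × Fin m,
            (u p.1 * u p.2) ⊗ₜ[k] (v p.1 * v p.2) := by
          have := rep_mul W hW hu hu
          rwa [one_mul] at this
        exact (piL_rep W hone _).symm
    _ = piL W (piL W x' * y') := piL_mul_piL W hW hu _ _

include hW hu in
/-- (⋆): `(Π^R(y) w)·1 = (w·1)(Π^R(y)·1)` -/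
lemma act_star (h2 : cond2 W ρ) (h4 : cond4 ρ) (h11 : cond11 ρ)
    (h22 : cond22 W ρ) (y' w : H) :
    ρ (piR W y' * w) 1 = ρ w 1 * ρ (piR W y') 1 := by
  obtain ⟨n, x, y, hxy⟩ := exists_rep (W.Δ w)
  have hrep := rep_mul W hW (comul_piR W hW hu y') hxy
  calc ρ (piR W y' * w) 1
      = ∑ p : Fin m × Fin n, ρ (u p.1 * x p.2) 1 * ρ (piR W y' * v p.1 * y p.2) 1 := by
        have := c2' W ρ h2 1 1 hrep
        rw [mul_one] at this
        exact this
    _ = ∑ i, ∑ j, ρ (u j) (ρ (x i) 1) * ρ (piR W y' * v j * y i) 1 := by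
        rw [Fintype.sum_prod_type, Finset.sum_comm]
        refine Finset.sum_congr rfl fun i _ => Finset.sum_congr rfl fun j _ => ?_
        rw [h11]
    _ = ∑ i, ∑ j, (ρ (x i) 1 * ρ (u j) 1) * ρ (piR W y' * v j * y i) 1 := by
        refine Finset.sum_congr rfl fun i _ => ?_
        exact h22_sum W ρ hu h22
          (bl LinearMap.id ((ρ.flip 1) ∘ₗ LinearMap.mulRight k (y i) ∘ₗ
            LinearMap.mulLeft k (piR W y'))) (ρ (x i) 1)
    _ = ∑ i, ρ (x i) 1 * ∑ j, ρ (u j) 1 * ρ (v j * (piR W y' * y i)) 1 := by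
        refine Finset.sum_congr rfl fun i _ => ?_
        have hmv : ∑ j, ρ (u j) 1 * ρ (piR W y' * v j * y i) 1 =
            ∑ j, ρ (u j) 1 * ρ (v j * (piR W y' * y i)) 1 := by
          refine projSum₂ W hW hu
            (bl (ρ.flip 1) ((ρ.flip 1) ∘ₗ LinearMap.mulRight k (y i) ∘ₗ
              LinearMap.mulLeft k (piR W y')))
            (bl (ρ.flip 1) ((ρ.flip 1) ∘ₗ LinearMap.mulRight k (piR W y' * y i)))
            (fun j => ?_)
          simp only [bl_apply, LinearMap.comp_apply, LinearMap.mulLeft_apply,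
            LinearMap.mulRight_apply, LinearMap.flip_apply]
          rw [← piLR_comm W hW hu, mul_assoc]
        calc ∑ j, ρ (x i) 1 * ρ (u j) 1 * ρ (piR W y' * v j * y i) 1
            = ρ (x i) 1 * ∑ j, ρ (u j) 1 * ρ (piR W y' * v j * y i) 1 := by
              rw [Finset.mul_sum]
              exact Finset.sum_congr rfl fun j _ => mul_assoc _ _ _
          _ = ρ (x i) 1 * ∑ j, ρ (u j) 1 * ρ (v j * (piR W y' * y i)) 1 := by
              rw [hmv]
    _ = ∑ i, ρ (x i) 1 * ρ (piR W y' * y i) 1 := by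
        refine Finset.sum_congr rfl fun i _ => ?_
        congr 1
        calc ∑ j, ρ (u j) 1 * ρ (v j * (piR W y' * y i)) 1
            = ∑ j, ρ (u j) 1 * ρ (v j) (ρ (piR W y' * y i) 1) := by
              refine Finset.sum_congr rfl fun j _ => ?_
              rw [h11]
          _ = ρ (piR W y' * y i) 1 := act_E1 W ρ hu h2 h4 _
    _ = ∑ i, ρ (x i) 1 * (ρ (y i) 1 * ρ (piR W y') 1) := by
        refine Finset.sum_congr rfl fun i _ => ?_
        rw [← h11, ← act_piR W ρ hu h22]
    _ = ρ w 1 * ρ (piR W y') 1 := by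
        calc ∑ i, ρ (x i) 1 * (ρ (y i) 1 * ρ (piR W y') 1)
            = (∑ i, ρ (x i) 1 * ρ (y i) 1) * ρ (piR W y') 1 := by
              rw [Finset.sum_mul]
              exact Finset.sum_congr rfl fun i _ => (mul_assoc _ _ _).symm
          _ = ρ w 1 * ρ (piR W y') 1 := by
              have := c2' W ρ h2 1 1 hxy
              rw [mul_one] at this
              rw [← this]

include hW hu in
/-- (Y1): `h·1 = Σ (h⁽¹⁾·1)(Π^L(h⁽²⁾)·1)` -/
lemma act_Y1 (h2 : cond2 W ρ) (h4 : cond4 ρ) (h11 : cond11 ρ)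
    (h22 : cond22 W ρ) {h : H} {ι : Type*} [Fintype ι] {x y : ι → H}
    (hxy : W.Δ h = ∑ i, x i ⊗ₜ[k] y i) :
    ρ h 1 = ∑ i, ρ (x i) 1 * ρ (piL W (y i)) 1 := by
  have f3l := F3L W hW hu hxy
  have e := rep_eq' (bl (ρ.flip 1) (ρ.flip 1) : H →ₗ[k] H →ₗ[k] A) f3l
  simp only [bl_apply, LinearMap.flip_apply] at e
  have main : ∑ j, ρ (u j * h) 1 * ρ (v j) 1 = ρ h 1 := by
    calc ∑ j, ρ (u j * h) 1 * ρ (v j) 1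
        = ∑ j, ρ (u j) (ρ h 1) * ρ (v j) 1 := by
          refine Finset.sum_congr rfl fun j _ => ?_
          rw [h11]
      _ = ∑ j, (ρ h 1 * ρ (u j) 1) * ρ (v j) 1 :=
          h22_sum W ρ hu h22 (bl LinearMap.id (ρ.flip 1)) (ρ h 1)
      _ = ρ h 1 * ∑ j, ρ (u j) 1 * ρ (v j) 1 := by
          rw [Finset.mul_sum]
          exact Finset.sum_congr rfl fun j _ => mul_assoc _ _ _
      _ = ρ h 1 := by rw [act_E1 W ρ hu h2 h4 1, mul_one]
  rw [e, main]

include hW hu in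
/-- (Z): `Π^R(y)·1 = Π^L(Π^R(y))·1` -/
lemma act_Z (h2 : cond2 W ρ) (h4 : cond4 ρ) (h11 : cond11 ρ)
    (h22 : cond22 W ρ) (y' : H) :
    ρ (piR W y') 1 = ρ (piL W (piR W y')) 1 := by
  have y1 := act_Y1 W hW ρ hu h2 h4 h11 h22 (comul_piR W hW hu y')
  rw [y1]
  have hmv : ∑ j, ρ (u j) 1 * ρ (piL W (piR W y' * v j)) 1 =
      ∑ j, ρ (u j) 1 * ρ (v j * piL W (piR W y')) 1 := by
    refine projSum₂ W hW hu
      (bl (ρ.flip 1) ((ρ.flip 1) ∘ₗ (piLmap k W) ∘ₗ LinearMap.mulLeft k (piR W y')))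
      (bl (ρ.flip 1) ((ρ.flip 1) ∘ₗ LinearMap.mulRight k (piL W (piR W y'))))
      (fun j => ?_)
    simp only [bl_apply, LinearMap.comp_apply, LinearMap.mulLeft_apply,
      LinearMap.mulRight_apply, LinearMap.flip_apply, piLmap_apply]
    have harg : piL W (piR W y' * piL W (v j))
        = piL W (v j) * piL W (piR W y') := by
      calc piL W (piR W y' * piL W (v j))
          = piL W (piL W (v j) * piR W y') := by rw [← piLR_comm W hW hu]
        _ = piL W (v j) * piL W (piR W y') :=
            (piL_piL_mul W hW hu (v j) (piR W y')).symm
    rw [harg]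
  rw [hmv]
  calc ∑ j, ρ (u j) 1 * ρ (v j * piL W (piR W y')) 1
      = ∑ j, ρ (u j) 1 * ρ (v j) (ρ (piL W (piR W y')) 1) := by
        refine Finset.sum_congr rfl fun j _ => ?_
        rw [h11]
    _ = ρ (piL W (piR W y')) 1 := act_E1 W ρ hu h2 h4 _

end Act

end S13
namespace S13

open TensorProduct LinearMap

variable {k H A : Type*} [Field k] [Ring H] [Algebra k H] [Ring A] [Algebra k A]
variable (W : WeakHopfData k H)

section CVlayer

variable (ρ : H →ₗ[k] A →ₗ[k] A)
variable (ς ςbar : H ⊗[k] H →ₗ[k] A)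

variable (k) in
/-- the convolution unit `e(h ⊗ g) = (hg)·1` -/
noncomputable def eW : H ⊗[k] H →ₗ[k] A := (ρ.flip 1) ∘ₗ LinearMap.mul' k H

@[simp] lemma eW_tmul (a b : H) : eW k ρ (a ⊗ₜ[k] b) = ρ (a * b) 1 := rfl

lemma cv_se (h19 : cond19 W ρ ⇑ς) : cv W ς (eW k ρ) = ς := by
  apply TensorProduct.ext'
  intro a b
  obtain ⟨n, x, y, ha⟩ := exists_rep (W.Δ a)
  obtain ⟨n', p, q, hb⟩ := exists_rep (W.Δ b)
  rw [cv_tmul W _ _ ha hb]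
  simp only [eW_tmul]
  exact (h19 a b n x y n' p q ha hb).symm

lemma cv_esb (h23 : cond23 W ρ ⇑ςbar) : cv W (eW k ρ) ςbar = ςbar := by
  apply TensorProduct.ext'
  intro a b
  obtain ⟨n, x, y, ha⟩ := exists_rep (W.Δ a)
  obtain ⟨n', p, q, hb⟩ := exists_rep (W.Δ b)
  rw [cv_tmul W _ _ ha hb]
  simp only [eW_tmul]
  exact (h23 a b n x y n' p q ha hb).symm

lemma cv_ssb (h24 : cond24 W ρ ⇑ς ⇑ςbar) : cv W ς ςbar = eW k ρ := by
  apply TensorProduct.ext'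
  intro a b
  obtain ⟨n, x, y, ha⟩ := exists_rep (W.Δ a)
  obtain ⟨n', p, q, hb⟩ := exists_rep (W.Δ b)
  rw [cv_tmul W _ _ ha hb, (h24 a b n x y n' p q ha hb).1, eW_tmul]

lemma cv_sbs (h24 : cond24 W ρ ⇑ς ⇑ςbar) : cv W ςbar ς = eW k ρ := by
  apply TensorProduct.ext'
  intro a b
  obtain ⟨n, x, y, ha⟩ := exists_rep (W.Δ a)
  obtain ⟨n', p, q, hb⟩ := exists_rep (W.Δ b)
  rw [cv_tmul W _ _ ha hb, (h24 a b n x y n' p q ha hb).2, eW_tmul]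

lemma cv_sbe (hW : IsWeakHopf W) (h19 : cond19 W ρ ⇑ς) (h23 : cond23 W ρ ⇑ςbar)
    (h24 : cond24 W ρ ⇑ς ⇑ςbar) : cv W ςbar (eW k ρ) = ςbar := by
  calc cv W ςbar (eW k ρ) = cv W ςbar (cv W ς ςbar) := by
        rw [cv_ssb W ρ ς ςbar h24]
    _ = cv W (cv W ςbar ς) ςbar := (cv_assoc W hW _ _ _).symm
    _ = cv W (eW k ρ) ςbar := by rw [cv_sbs W ρ ς ςbar h24]
    _ = ςbar := cv_esb W ρ ςbar h23

lemma cv_es (hW : IsWeakHopf W) (h19 : cond19 W ρ ⇑ς) (h24 : cond24 W ρ ⇑ς ⇑ςbar) :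
    cv W (eW k ρ) ς = ς := by
  calc cv W (eW k ρ) ς = cv W (cv W ς ςbar) ς := by
        rw [cv_ssb W ρ ς ςbar h24]
    _ = cv W ς (cv W ςbar ς) := cv_assoc W hW _ _ _
    _ = cv W ς (eW k ρ) := by rw [cv_sbs W ρ ς ςbar h24]
    _ = ς := cv_se W ρ ς h19

/-- right uniqueness -/
lemma UR (hW : IsWeakHopf W) (h24 : cond24 W ρ ⇑ς ⇑ςbar) (F G : H ⊗[k] H →ₗ[k] A)
    (hF : cv W F (eW k ρ) = F) (hG : cv W G (eW k ρ) = G)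
    (hFG : cv W F ς = cv W G ς) : F = G := by
  calc F = cv W F (eW k ρ) := hF.symm
    _ = cv W F (cv W ς ςbar) := by rw [cv_ssb W ρ ς ςbar h24]
    _ = cv W (cv W F ς) ςbar := (cv_assoc W hW _ _ _).symm
    _ = cv W (cv W G ς) ςbar := by rw [hFG]
    _ = cv W G (cv W ς ςbar) := cv_assoc W hW _ _ _
    _ = cv W G (eW k ρ) := by rw [cv_ssb W ρ ς ςbar h24]
    _ = G := hG

/-- left uniqueness -/
lemma UL (hW : IsWeakHopf W) (h24 : cond24 W ρ ⇑ς ⇑ςbar) (F G : H ⊗[k] H →ₗ[k] A)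
    (hF : cv W (eW k ρ) F = F) (hG : cv W (eW k ρ) G = G)
    (hFG : cv W ς F = cv W ς G) : F = G := by
  calc F = cv W (eW k ρ) F := hF.symm
    _ = cv W (cv W ςbar ς) F := by rw [cv_sbs W ρ ς ςbar h24]
    _ = cv W ςbar (cv W ς F) := cv_assoc W hW _ _ _
    _ = cv W ςbar (cv W ς G) := by rw [hFG]
    _ = cv W (cv W ςbar ς) G := (cv_assoc W hW _ _ _).symm
    _ = cv W (eW k ρ) G := by rw [cv_sbs W ρ ς ςbar h24]
    _ = G := hG

end CVlayer

section CVshift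

variable (hW : IsWeakHopf W)
variable {m : ℕ} {u v : Fin m → H} (hu : W.Δ 1 = ∑ j, u j ⊗ₜ[k] v j)
variable (X Y : H ⊗[k] H →ₗ[k] A)

include hW hu in
/-- CV1: right multiplication in slot 1, `Δc = Σ (1⁽¹⁾ c) ⊗ 1⁽²⁾` -/
lemma CV1 {c : H} (hc : W.Δ c = ∑ j, (u j * c) ⊗ₜ[k] v j) (a b : H) :
    cv W (X ∘ₗ LinearMap.rTensor H (LinearMap.mulRight k c)) Y (a ⊗ₜ[k] b) =
      cv W X Y ((a * c) ⊗ₜ[k] b) := by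
  obtain ⟨n, x, y, ha⟩ := exists_rep (W.Δ a)
  obtain ⟨n', p, q, hb⟩ := exists_rep (W.Δ b)
  rw [cv_tmul W _ _ ha hb, cv_tmul W X Y (rep_mul W hW ha hc) hb]
  set B : H →ₗ[k] H →ₗ[k] A :=
    ∑ j, bl (X ∘ₗ tmr k H (p j) ∘ₗ LinearMap.mulRight k c)
      (Y ∘ₗ tmr k H (q j)) with hB
  have Bapp : ∀ c₁ c₂, B c₁ c₂ = ∑ j, X ((c₁ * c) ⊗ₜ[k] p j) * Y (c₂ ⊗ₜ[k] q j) := by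
    intro c₁ c₂; rw [hB]; simp [LinearMap.sum_apply]
  calc ∑ i, ∑ j, (X ∘ₗ LinearMap.rTensor H (LinearMap.mulRight k c))
        (x i ⊗ₜ[k] p j) * Y (y i ⊗ₜ[k] q j)
      = ∑ i, B (x i) (y i) := by
        refine Finset.sum_congr rfl fun i _ => ?_
        rw [Bapp]
        rfl
    _ = ∑ r : Fin n × Fin m, B (x r.1 * u r.2) (y r.1 * v r.2) :=
        rep_eq B ha (rep_mul_one W hW ha hu)
    _ = ∑ r : Fin n × Fin m, ∑ j, X ((x r.1 * (u r.2 * c)) ⊗ₜ[k] p j) *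
          Y ((y r.1 * v r.2) ⊗ₜ[k] q j) := by
        refine Finset.sum_congr rfl fun r _ => ?_
        rw [Bapp]
        refine Finset.sum_congr rfl fun j _ => ?_
        rw [mul_assoc]

include hW hu in
/-- CV2: left multiplication in slot 1, `Δc = Σ (c 1⁽¹⁾) ⊗ 1⁽²⁾` -/
lemma CV2 {c : H} (hc : W.Δ c = ∑ j, (c * u j) ⊗ₜ[k] v j) (a b : H) :
    cv W (X ∘ₗ LinearMap.rTensor H (LinearMap.mulLeft k c)) Y (a ⊗ₜ[k] b) =
      cv W X Y ((c * a) ⊗ₜ[k] b) := by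
  obtain ⟨n, x, y, ha⟩ := exists_rep (W.Δ a)
  obtain ⟨n', p, q, hb⟩ := exists_rep (W.Δ b)
  rw [cv_tmul W _ _ ha hb, cv_tmul W X Y (rep_mul W hW hc ha) hb]
  set B : H →ₗ[k] H →ₗ[k] A :=
    ∑ j, bl (X ∘ₗ tmr k H (p j) ∘ₗ LinearMap.mulLeft k c)
      (Y ∘ₗ tmr k H (q j)) with hB
  have Bapp : ∀ c₁ c₂, B c₁ c₂ = ∑ j, X ((c * c₁) ⊗ₜ[k] p j) * Y (c₂ ⊗ₜ[k] q j) := by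
    intro c₁ c₂; rw [hB]; simp [LinearMap.sum_apply]
  calc ∑ i, ∑ j, (X ∘ₗ LinearMap.rTensor H (LinearMap.mulLeft k c))
        (x i ⊗ₜ[k] p j) * Y (y i ⊗ₜ[k] q j)
      = ∑ i, B (x i) (y i) := by
        refine Finset.sum_congr rfl fun i _ => ?_
        rw [Bapp]
        rfl
    _ = ∑ r : Fin m × Fin n, B (u r.1 * x r.2) (v r.1 * y r.2) :=
        rep_eq B ha (rep_one_mul W hW ha hu)
    _ = ∑ r : Fin m × Fin n, ∑ j, X ((c * u r.1 * x r.2) ⊗ₜ[k] p j) *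
          Y ((v r.1 * y r.2) ⊗ₜ[k] q j) := by
        refine Finset.sum_congr rfl fun r _ => ?_
        rw [Bapp]
        refine Finset.sum_congr rfl fun j _ => ?_
        rw [mul_assoc]

include hW hu in
/-- CV3: left multiplication in slot 2 of the first map, `Δc = Σ (c 1⁽¹⁾) ⊗ 1⁽²⁾` -/
lemma CV3 {c : H} (hc : W.Δ c = ∑ j, (c * u j) ⊗ₜ[k] v j) (a b : H) :
    cv W (X ∘ₗ LinearMap.lTensor H (LinearMap.mulLeft k c)) Y (a ⊗ₜ[k] b) =
      cv W X Y (a ⊗ₜ[k] (c * b)) := by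
  obtain ⟨n, x, y, ha⟩ := exists_rep (W.Δ a)
  obtain ⟨n', p, q, hb⟩ := exists_rep (W.Δ b)
  rw [cv_tmul W _ _ ha hb, cv_tmul W X Y ha (rep_mul W hW hc hb)]
  set B : H →ₗ[k] H →ₗ[k] A :=
    ∑ i, bl (X ∘ₗ tml k H (x i) ∘ₗ LinearMap.mulLeft k c)
      (Y ∘ₗ tml k H (y i)) with hB
  have Bapp : ∀ c₁ c₂, B c₁ c₂ = ∑ i, X (x i ⊗ₜ[k] (c * c₁)) * Y (y i ⊗ₜ[k] c₂) := by
    intro c₁ c₂; rw [hB]; simp [LinearMap.sum_apply]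
  calc ∑ i, ∑ j, (X ∘ₗ LinearMap.lTensor H (LinearMap.mulLeft k c))
        (x i ⊗ₜ[k] p j) * Y (y i ⊗ₜ[k] q j)
      = ∑ j, B (p j) (q j) := by
        rw [Finset.sum_comm]
        refine Finset.sum_congr rfl fun j _ => ?_
        rw [Bapp]
        rfl
    _ = ∑ r : Fin m × Fin n', B (u r.1 * p r.2) (v r.1 * q r.2) :=
        rep_eq B hb (rep_one_mul W hW hb hu)
    _ = ∑ i, ∑ r : Fin m × Fin n', X (x i ⊗ₜ[k] (c * u r.1 * p r.2)) *
          Y (y i ⊗ₜ[k] (v r.1 * q r.2)) := by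
        rw [Finset.sum_comm]
        refine Finset.sum_congr rfl fun r _ => ?_
        rw [Bapp]
        refine Finset.sum_congr rfl fun i _ => ?_
        rw [mul_assoc]

include hW hu in
/-- CV4: left multiplication in slot 1 of the second map, `Δc = Σ 1⁽¹⁾ ⊗ (c 1⁽²⁾)` -/
lemma CV4 {c : H} (hc : W.Δ c = ∑ j, u j ⊗ₜ[k] (c * v j)) (a b : H) :
    cv W X (Y ∘ₗ LinearMap.rTensor H (LinearMap.mulLeft k c)) (a ⊗ₜ[k] b) =
      cv W X Y ((c * a) ⊗ₜ[k] b) := by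
  obtain ⟨n, x, y, ha⟩ := exists_rep (W.Δ a)
  obtain ⟨n', p, q, hb⟩ := exists_rep (W.Δ b)
  rw [cv_tmul W _ _ ha hb, cv_tmul W X Y (rep_mul W hW hc ha) hb]
  set B : H →ₗ[k] H →ₗ[k] A :=
    ∑ j, bl (X ∘ₗ tmr k H (p j))
      (Y ∘ₗ tmr k H (q j) ∘ₗ LinearMap.mulLeft k c) with hB
  have Bapp : ∀ c₁ c₂, B c₁ c₂ = ∑ j, X (c₁ ⊗ₜ[k] p j) * Y ((c * c₂) ⊗ₜ[k] q j) := by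
    intro c₁ c₂; rw [hB]; simp [LinearMap.sum_apply]
  calc ∑ i, ∑ j, X (x i ⊗ₜ[k] p j) * (Y ∘ₗ LinearMap.rTensor H
        (LinearMap.mulLeft k c)) (y i ⊗ₜ[k] q j)
      = ∑ i, B (x i) (y i) := by
        refine Finset.sum_congr rfl fun i _ => ?_
        rw [Bapp]
        rfl
    _ = ∑ r : Fin m × Fin n, B (u r.1 * x r.2) (v r.1 * y r.2) :=
        rep_eq B ha (rep_one_mul W hW ha hu)
    _ = ∑ r : Fin m × Fin n, ∑ j, X ((u r.1 * x r.2) ⊗ₜ[k] p j) *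
          Y ((c * v r.1 * y r.2) ⊗ₜ[k] q j) := by
        refine Finset.sum_congr rfl fun r _ => ?_
        rw [Bapp]
        refine Finset.sum_congr rfl fun j _ => ?_
        rw [mul_assoc]

include hW hu in
/-- CV5: left multiplication in slot 2 of the second map, `Δc = Σ 1⁽¹⁾ ⊗ (c 1⁽²⁾)` -/
lemma CV5 {c : H} (hc : W.Δ c = ∑ j, u j ⊗ₜ[k] (c * v j)) (a b : H) :
    cv W X (Y ∘ₗ LinearMap.lTensor H (LinearMap.mulLeft k c)) (a ⊗ₜ[k] b) =
      cv W X Y (a ⊗ₜ[k] (c * b)) := by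
  obtain ⟨n, x, y, ha⟩ := exists_rep (W.Δ a)
  obtain ⟨n', p, q, hb⟩ := exists_rep (W.Δ b)
  rw [cv_tmul W _ _ ha hb, cv_tmul W X Y ha (rep_mul W hW hc hb)]
  set B : H →ₗ[k] H →ₗ[k] A :=
    ∑ i, bl (X ∘ₗ tml k H (x i))
      (Y ∘ₗ tml k H (y i) ∘ₗ LinearMap.mulLeft k c) with hB
  have Bapp : ∀ c₁ c₂, B c₁ c₂ = ∑ i, X (x i ⊗ₜ[k] c₁) * Y (y i ⊗ₜ[k] (c * c₂)) := by
    intro c₁ c₂; rw [hB]; simp [LinearMap.sum_apply]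
  calc ∑ i, ∑ j, X (x i ⊗ₜ[k] p j) * (Y ∘ₗ LinearMap.lTensor H
        (LinearMap.mulLeft k c)) (y i ⊗ₜ[k] q j)
      = ∑ j, B (p j) (q j) := by
        rw [Finset.sum_comm]
        refine Finset.sum_congr rfl fun j _ => ?_
        rw [Bapp]
        rfl
    _ = ∑ r : Fin m × Fin n', B (u r.1 * p r.2) (v r.1 * q r.2) :=
        rep_eq B hb (rep_one_mul W hW hb hu)
    _ = ∑ i, ∑ r : Fin m × Fin n', X (x i ⊗ₜ[k] (u r.1 * p r.2)) *
          Y (y i ⊗ₜ[k] (c * v r.1 * q r.2)) := by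
        rw [Finset.sum_comm]
        refine Finset.sum_congr rfl fun r _ => ?_
        rw [Bapp]
        refine Finset.sum_congr rfl fun i _ => ?_
        rw [mul_assoc]

end CVshift

end S13
namespace S13

open TensorProduct LinearMap

variable {k H A : Type*} [Field k] [Ring H] [Algebra k H] [Ring A] [Algebra k A]
variable (W : WeakHopfData k H)

section Glue

variable (hW : IsWeakHopf W) (ρ : H →ₗ[k] A →ₗ[k] A)
variable {m : ℕ} {u v : Fin m → H} (hu : W.Δ 1 = ∑ j, u j ⊗ₜ[k] v j)

include hW hu in
/-- (GB): `S⁻¹(l)·1 = l·1` -/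
lemma act_GB (h2 : cond2 W ρ) (h4 : cond4 ρ) (h11 : cond11 ρ)
    (h22 : cond22 W ρ) (m' : H) :
    ρ (W.Sinv (piL W m')) 1 = ρ (piL W m') 1 := by
  have ga := GA W hW hu m'
  calc ρ (W.Sinv (piL W m')) 1
      = ρ (piR W (W.Sinv (piL W m'))) 1 := by rw [ga]
    _ = ρ (piL W (piR W (W.Sinv (piL W m')))) 1 :=
        act_Z W hW ρ hu h2 h4 h11 h22 _
    _ = ρ (piL W (W.Sinv (piL W m'))) 1 := by rw [ga]
    _ = ρ (piL W m') 1 := by rw [piL_Sinv W hW hu m']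

include hW hu in
/-- `(S⁻¹(l) w)·1 = (w·1)(l·1)` -/
lemma act_SinvMul (h2 : cond2 W ρ) (h4 : cond4 ρ) (h11 : cond11 ρ)
    (h22 : cond22 W ρ) (m' w : H) :
    ρ (W.Sinv (piL W m') * w) 1 = ρ w 1 * ρ (piL W m') 1 := by
  conv_lhs => rw [← GA W hW hu m']
  rw [act_star W hW ρ hu h2 h4 h11 h22 (W.Sinv (piL W m')) w, GA W hW hu m',
    act_GB W hW ρ hu h2 h4 h11 h22 m']

include hW hu in
/-- `Δ(S⁻¹ l) = Σ 1⁽¹⁾ ⊗ (S⁻¹(l) 1⁽²⁾)` -/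
lemma comul_Sinv (m' : H) :
    W.Δ (W.Sinv (piL W m')) = ∑ j, u j ⊗ₜ[k] (W.Sinv (piL W m') * v j) := by
  have h0 := comul_piR W hW hu (W.Sinv (piL W m'))
  rwa [GA W hW hu m'] at h0

end Glue

section Mains

variable (hW : IsWeakHopf W) (ρ : H →ₗ[k] A →ₗ[k] A)
variable (ς ςbar : H ⊗[k] H →ₗ[k] A)

include hW in
/-- MAIN 1: `ς̄` is `H^L`-balanced -/
lemma main_bal (h2 : cond2 W ρ) (h4 : cond4 ρ) (h11 : cond11 ρ)
    (h19 : cond19 W ρ ⇑ς) (h22 : cond22 W ρ) (h23 : cond23 W ρ ⇑ςbar)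
    (h24 : cond24 W ρ ⇑ς ⇑ςbar) (m' h g : H) :
    ςbar ((h * piL W m') ⊗ₜ[k] g) = ςbar (h ⊗ₜ[k] (piL W m' * g)) := by
  obtain ⟨n₀, u, v, hu⟩ := exists_rep (W.Δ 1)
  have hF4 := comul_piL W hW hu m'
  have hF4' := comul_piL' W hW hu m'
  have key : ςbar ∘ₗ LinearMap.rTensor H (LinearMap.mulRight k (piL W m')) =
      ςbar ∘ₗ LinearMap.lTensor H (LinearMap.mulLeft k (piL W m')) := by
    refine UR W ρ ς ςbar hW h24 _ _ ?_ ?_ ?_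
    · apply TensorProduct.ext'
      intro a b
      rw [CV1 W hW hu ςbar (eW k ρ) hF4 a b,
        cv_sbe W ρ ς ςbar hW h19 h23 h24]
      rfl
    · apply TensorProduct.ext'
      intro a b
      rw [CV3 W hW hu ςbar (eW k ρ) hF4' a b,
        cv_sbe W ρ ς ςbar hW h19 h23 h24]
      rfl
    · apply TensorProduct.ext'
      intro a b
      rw [CV1 W hW hu ςbar ς hF4 a b, CV3 W hW hu ςbar ς hF4' a b,
        cv_sbs W ρ ς ςbar h24]
      simp only [eW_tmul]
      rw [mul_assoc]
  have := congrArg (fun (T : H ⊗[k] H →ₗ[k] A) => T (h ⊗ₜ[k] g)) key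
  simpa using this

include hW in
/-- MAIN 2: condition (14), first part -/
lemma main_14a (h2 : cond2 W ρ) (h4 : cond4 ρ) (h11 : cond11 ρ)
    (h19 : cond19 W ρ ⇑ς) (h22 : cond22 W ρ) (h23 : cond23 W ρ ⇑ςbar)
    (h24 : cond24 W ρ ⇑ς ⇑ςbar) (m' h g : H) :
    ςbar ((piL W m' * h) ⊗ₜ[k] g) = ρ (piL W m') 1 * ςbar (h ⊗ₜ[k] g) := by
  obtain ⟨n₀, u, v, hu⟩ := exists_rep (W.Δ 1)
  have hF4' := comul_piL' W hW hu m'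
  have key : ςbar ∘ₗ LinearMap.rTensor H (LinearMap.mulLeft k (piL W m')) =
      LinearMap.mulLeft k (ρ (piL W m') 1) ∘ₗ ςbar := by
    refine UR W ρ ς ςbar hW h24 _ _ ?_ ?_ ?_
    · apply TensorProduct.ext'
      intro a b
      rw [CV2 W hW hu ςbar (eW k ρ) hF4' a b,
        cv_sbe W ρ ς ςbar hW h19 h23 h24]
      rfl
    · rw [cv_mulLeft W ςbar (eW k ρ) (ρ (piL W m') 1),
        cv_sbe W ρ ς ςbar hW h19 h23 h24]
    · rw [cv_mulLeft W ςbar ς (ρ (piL W m') 1), cv_sbs W ρ ς ςbar h24]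
      apply TensorProduct.ext'
      intro a b
      rw [CV2 W hW hu ςbar ς hF4' a b, cv_sbs W ρ ς ςbar h24]
      simp only [eW_tmul, LinearMap.comp_apply, LinearMap.mulLeft_apply]
      rw [mul_assoc, ← piL_mul_act W hW ρ hu h2 h4 h11 h22 m' (a * b)]
  have := congrArg (fun (T : H ⊗[k] H →ₗ[k] A) => T (h ⊗ₜ[k] g)) key
  simpa using this

include hW in
/-- MAIN 3: condition (14), second part -/
lemma main_14b (h2 : cond2 W ρ) (h4 : cond4 ρ) (h11 : cond11 ρ)
    (h19 : cond19 W ρ ⇑ς) (h22 : cond22 W ρ) (h23 : cond23 W ρ ⇑ςbar)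
    (h24 : cond24 W ρ ⇑ς ⇑ςbar) (m' h g : H) :
    ςbar ((W.Sinv (piL W m') * h) ⊗ₜ[k] g) =
      ςbar (h ⊗ₜ[k] g) * ρ (piL W m') 1 := by
  obtain ⟨n₀, u, v, hu⟩ := exists_rep (W.Δ 1)
  have hSr := comul_Sinv W hW hu m'
  have key : ςbar ∘ₗ LinearMap.rTensor H (LinearMap.mulLeft k (W.Sinv (piL W m'))) =
      LinearMap.mulRight k (ρ (piL W m') 1) ∘ₗ ςbar := by
    refine UL W ρ ς ςbar hW h24 _ _ ?_ ?_ ?_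
    · apply TensorProduct.ext'
      intro a b
      rw [CV4 W hW hu (eW k ρ) ςbar hSr a b, cv_esb W ρ ςbar h23]
      rfl
    · rw [cv_mulRight W (eW k ρ) ςbar (ρ (piL W m') 1),
        cv_esb W ρ ςbar h23]
    · rw [cv_mulRight W ς ςbar (ρ (piL W m') 1), cv_ssb W ρ ς ςbar h24]
      apply TensorProduct.ext'
      intro a b
      rw [CV4 W hW hu ς ςbar hSr a b, cv_ssb W ρ ς ςbar h24]
      simp only [eW_tmul, LinearMap.comp_apply, LinearMap.mulRight_apply]
      rw [mul_assoc, act_SinvMul W hW ρ hu h2 h4 h11 h22 m' (a * b)]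
  have := congrArg (fun (T : H ⊗[k] H →ₗ[k] A) => T (h ⊗ₜ[k] g)) key
  simpa using this

end Mains

end S13
namespace S13

open TensorProduct LinearMap

variable {k H A : Type*} [Field k] [Ring H] [Algebra k H] [Ring A] [Algebra k A]
variable (W : WeakHopfData k H)

section Main4

variable (hW : IsWeakHopf W) (ρ : H →ₗ[k] A →ₗ[k] A)
variable (ς ςbar : H ⊗[k] H →ₗ[k] A)

variable (k) in
/-- `θ(h ⊗ g) = (h⁽¹⁾ ⊗ g) ⊗ h⁽²⁾` -/
noncomputable def theta : H ⊗[k] H →ₗ[k] (H ⊗[k] H) ⊗[k] H :=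
  (TensorProduct.assoc k H H H).symm.toLinearMap ∘ₗ
    LinearMap.lTensor H (TensorProduct.comm k H H).toLinearMap ∘ₗ
    (TensorProduct.assoc k H H H).toLinearMap ∘ₗ
    LinearMap.rTensor H W.Δ

variable (k) in
/-- `G(h ⊗ g) = Σ ς̄(h⁽¹⁾ ⊗ g) (h⁽²⁾·c)` -/
noncomputable def Gmap (c : A) : H ⊗[k] H →ₗ[k] A :=
  LinearMap.mul' k A ∘ₗ TensorProduct.map ςbar (ρ.flip c) ∘ₗ theta k W

lemma Gmap_tmul (c : A) {a : H} (b : H) {ι : Type*} [Fintype ι] {x y : ι → H}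
    (ha : W.Δ a = ∑ i, x i ⊗ₜ[k] y i) :
    Gmap k W ρ ςbar c (a ⊗ₜ[k] b) = ∑ i, ςbar (x i ⊗ₜ[k] b) * ρ (y i) c := by
  simp only [Gmap, theta, LinearMap.comp_apply, LinearMap.rTensor_tmul, ha]
  rw [TensorProduct.sum_tmul]
  simp only [map_sum, LinearEquiv.coe_coe, TensorProduct.assoc_tmul,
    LinearMap.lTensor_tmul, TensorProduct.comm_tmul,
    TensorProduct.assoc_symm_tmul, TensorProduct.map_tmul,
    LinearMap.mul'_apply, LinearMap.flip_apply]

include hW in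
lemma cv_Gmap (c : A) (X : H ⊗[k] H →ₗ[k] A) :
    cv W X (Gmap k W ρ ςbar c) = Gmap k W ρ (cv W X ςbar) c := by
  apply TensorProduct.ext'
  intro a b
  obtain ⟨n, x, y, ha⟩ := exists_rep (W.Δ a)
  obtain ⟨n', p, q, hb⟩ := exists_rep (W.Δ b)
  choose nX X' Y' hXY using fun i => exists_rep (W.Δ (x i))
  choose nY Y'' Z'' hYZ using fun i => exists_rep (W.Δ (y i))
  set F : H →ₗ[k] H →ₗ[k] H →ₗ[k] A :=
    ∑ j, tr (X ∘ₗ tmr k H (p j)) (ςbar ∘ₗ tmr k H (q j)) (ρ.flip c) with hF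
  have Fapp : ∀ α₁ α₂ α₃, F α₁ α₂ α₃ =
      ∑ j, X (α₁ ⊗ₜ[k] p j) * ςbar (α₂ ⊗ₜ[k] q j) * ρ α₃ c := by
    intro α₁ α₂ α₃; rw [hF]; simp [LinearMap.sum_apply]
  calc cv W X (Gmap k W ρ ςbar c) (a ⊗ₜ[k] b)
      = ∑ i, ∑ j, X (x i ⊗ₜ[k] p j) * Gmap k W ρ ςbar c (y i ⊗ₜ[k] q j) :=
        cv_tmul W _ _ ha hb
    _ = ∑ i, ∑ t, F (x i) (Y'' i t) (Z'' i t) := by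
        refine Finset.sum_congr rfl fun i _ => ?_
        calc ∑ j, X (x i ⊗ₜ[k] p j) * Gmap k W ρ ςbar c (y i ⊗ₜ[k] q j)
            = ∑ j, ∑ t, X (x i ⊗ₜ[k] p j) *
                (ςbar (Y'' i t ⊗ₜ[k] q j) * ρ (Z'' i t) c) := by
              refine Finset.sum_congr rfl fun j _ => ?_
              rw [Gmap_tmul W ρ ςbar c (q j) (hYZ i), Finset.mul_sum]
          _ = ∑ t, ∑ j, X (x i ⊗ₜ[k] p j) * ςbar (Y'' i t ⊗ₜ[k] q j) *
                ρ (Z'' i t) c := by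
              rw [Finset.sum_comm]
              exact Finset.sum_congr rfl fun t _ => Finset.sum_congr rfl
                fun j _ => (mul_assoc _ _ _).symm
          _ = ∑ t, F (x i) (Y'' i t) (Z'' i t) := by
              exact Finset.sum_congr rfl fun t _ => (Fapp _ _ _).symm
    _ = ∑ i, ∑ t, F (X' i t) (Y' i t) (y i) :=
        (co_sum W hW F ha hXY hYZ).symm
    _ = ∑ i, cv W X ςbar (x i ⊗ₜ[k] b) * ρ (y i) c := by
        refine Finset.sum_congr rfl fun i _ => ?_
        calc ∑ t, F (X' i t) (Y' i t) (y i)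
            = ∑ t, (∑ j, X (X' i t ⊗ₜ[k] p j) * ςbar (Y' i t ⊗ₜ[k] q j)) *
                ρ (y i) c := by
              refine Finset.sum_congr rfl fun t _ => ?_
              rw [Fapp, Finset.sum_mul]
          _ = (∑ t, ∑ j, X (X' i t ⊗ₜ[k] p j) * ςbar (Y' i t ⊗ₜ[k] q j)) *
                ρ (y i) c := by rw [Finset.sum_mul]
          _ = cv W X ςbar (x i ⊗ₜ[k] b) * ρ (y i) c := by
              rw [cv_tmul W X ςbar (hXY i) hb]
    _ = Gmap k W ρ (cv W X ςbar) c (a ⊗ₜ[k] b) :=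
        (Gmap_tmul W ρ (cv W X ςbar) c b ha).symm

include hW in
/-- MAIN 4: condition (15), map form -/
lemma main_15 (h2 : cond2 W ρ) (h4 : cond4 ρ) (h11 : cond11 ρ)
    (h19 : cond19 W ρ ⇑ς) (h22 : cond22 W ρ) (h23 : cond23 W ρ ⇑ςbar)
    (h24 : cond24 W ρ ⇑ς ⇑ςbar) (m' : H) :
    ςbar ∘ₗ LinearMap.lTensor H (LinearMap.mulLeft k (W.Sinv (piL W m'))) =
      Gmap k W ρ ςbar (ρ (piL W m') 1) := by
  obtain ⟨n₀, u, v, hu⟩ := exists_rep (W.Δ 1)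
  have hSr := comul_Sinv W hW hu m'
  refine UL W ρ ς ςbar hW h24 _ _ ?_ ?_ ?_
  · -- cv e F = F
    apply TensorProduct.ext'
    intro a b
    rw [CV5 W hW hu (eW k ρ) ςbar hSr a b, cv_esb W ρ ςbar h23]
    rfl
  · -- cv e G = G
    rw [cv_Gmap W hW ρ ςbar _ (eW k ρ), cv_esb W ρ ςbar h23]
  · -- cv ς F = cv ς G
    rw [cv_Gmap W hW ρ ςbar _ ς, cv_ssb W ρ ς ςbar h24]
    apply TensorProduct.ext'
    intro a b
    obtain ⟨n, x, y, ha⟩ := exists_rep (W.Δ a)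
    rw [CV5 W hW hu ς ςbar hSr a b, cv_ssb W ρ ς ςbar h24,
      Gmap_tmul W ρ (eW k ρ) _ b ha]
    calc eW k ρ (a ⊗ₜ[k] (W.Sinv (piL W m') * b))
        = ρ (a * (W.Sinv (piL W m') * b)) 1 := rfl
      _ = ρ a (ρ (W.Sinv (piL W m') * b) 1) := (h11 _ _).symm
      _ = ρ a (ρ b 1 * ρ (piL W m') 1) := by
          rw [act_SinvMul W hW ρ hu h2 h4 h11 h22 m' b]
      _ = ∑ i, ρ (x i) (ρ b 1) * ρ (y i) (ρ (piL W m') 1) :=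
          c2' W ρ h2 _ _ ha
      _ = ∑ i, eW k ρ (x i ⊗ₜ[k] b) * ρ (y i) (ρ (piL W m') 1) := by
          refine Finset.sum_congr rfl fun i _ => ?_
          rw [eW_tmul, h11]

end Main4

end S13
/-- if `ρ, ς` satisfy (2), (4), (11), (17)–(22) and `ς` is
invertible with inverse `ς̄` (conditions (23), (24)), then `ς̄` is
`H^L`-balanced and, with `σ(h,k) := ς(h⊗k)` and `σ̄(h,k) := ς̄(h⊗k)`, the map
`σ̄` satisfies conditions (13)–(16). -/
theorem statement13 {k H A : Type*} [Field k] [Ring H] [Algebra k H] [Ring A] [Algebra k A]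
    (W : WeakHopfData k H) (hW : IsWeakHopf W) (ρ : H →ₗ[k] A →ₗ[k] A)
    (ς : H ⊗[k] H →ₗ[k] A) (ςbar : H ⊗[k] H →ₗ[k] A)
    (h2 : cond2 W ρ) (h4 : cond4 ρ) (h11 : cond11 ρ)
    (h17 : cond17 W ρ ⇑ς) (h18 : cond18 W ρ ⇑ς) (h19 : cond19 W ρ ⇑ς)
    (h20 : cond20 W ρ ⇑ς) (h21 : cond21 W ρ ⇑ς) (h22 : cond22 W ρ)
    (h23 : cond23 W ρ ⇑ςbar) (h24 : cond24 W ρ ⇑ς ⇑ςbar) :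
    (∀ (h g : H), ∀ l ∈ HL W, ςbar ((h * l) ⊗ₜ[k] g) = ςbar (h ⊗ₜ[k] (l * g))) ∧
      cond13 W ρ (fun h g => ςbar (h ⊗ₜ[k] g)) ∧
      cond14 W ρ (fun h g => ςbar (h ⊗ₜ[k] g)) ∧
      cond15 W ρ (fun h g => ςbar (h ⊗ₜ[k] g)) ∧
      cond16 W ρ (fun h g => ς (h ⊗ₜ[k] g)) (fun h g => ςbar (h ⊗ₜ[k] g)) := by

  refine ⟨?_, ?_, ?_, ?_, ?_⟩
  · -- H^L-balancedness of ς̄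
    rintro h g l ⟨m', rfl⟩
    exact S13.main_bal W hW ρ ς ςbar h2 h4 h11 h19 h22 h23 h24 m' h g
  · -- cond13
    intro h g n x y m u v hx hg
    exact h23 h g n x y m u v hx hg
  · -- cond14
    rintro h g l ⟨m', rfl⟩
    exact ⟨S13.main_14a W hW ρ ς ςbar h2 h4 h11 h19 h22 h23 h24 m' h g,
      S13.main_14b W hW ρ ς ςbar h2 h4 h11 h19 h22 h23 h24 m' h g⟩
  · -- cond15
    rintro h g l ⟨m', rfl⟩ n x y hxy
    have hG := S13.Gmap_tmul W ρ ςbar (ρ (piL W m') 1) g hxy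
    have key := S13.main_15 W hW ρ ς ςbar h2 h4 h11 h19 h22 h23 h24 m'
    have := congrArg (fun (T : H ⊗[k] H →ₗ[k] A) => T (h ⊗ₜ[k] g)) key
    simp only [LinearMap.comp_apply, LinearMap.lTensor_tmul,
      LinearMap.mulLeft_apply] at this
    show ∑ i, ςbar (x i ⊗ₜ[k] g) * ρ (y i) (ρ (piL W m') 1) =
      ςbar (h ⊗ₜ[k] (W.Sinv (piL W m') * g))
    rw [this]
    exact hG.symm
  · -- cond16
    intro h g n x y m u v hx hg
    constructor
    · have e1 := S13.cv_tmul W ς ςbar hx hg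
      rw [S13.cv_ssb W ρ ς ςbar h24] at e1
      rw [← e1, S13.eW_tmul, h11]
    · have e1 := S13.cv_tmul W ςbar ς hx hg
      rw [S13.cv_sbs W ρ ς ςbar h24] at e1
      rw [← e1, S13.eW_tmul]
end

section
/- Let ς:H⊗H→A be a k-linear map such that ρ and ς satisfy conditions (2), (4), (11) and (17)–(22), and let ς̄:H⊗H→A satisfy conditions (23) and (24). Then ς̄(h⊗k) = ς̄(h⁽¹⁾⊗k⁽¹⁾)(h⁽²⁾k⁽²⁾·1_A) for all h,k ∈ H. -/
open scoped TensorProduct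

lemma exists_fin_rep {k M N : Type*} [Field k] [AddCommGroup M] [Module k M]
    [AddCommGroup N] [Module k N] (z : M ⊗[k] N) :
    ∃ (n : ℕ) (x : Fin n → M) (y : Fin n → N), z = ∑ i, x i ⊗ₜ[k] y i := by
  obtain ⟨S, hS⟩ := TensorProduct.exists_finset z
  refine ⟨S.card, fun i => ((S.equivFin.symm i) : M × N).1,
    fun i => ((S.equivFin.symm i) : M × N).2, ?_⟩
  rw [hS, ← Finset.sum_coe_sort S (fun i => i.1 ⊗ₜ[k] i.2),
    ← Equiv.sum_comp S.equivFin.symm]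

lemma sum_swap_blocks {M : Type*} [AddCommMonoid M] {n m : ℕ} {nn : Fin n → ℕ}
    {mm : Fin m → ℕ} (f : (i : Fin n) → Fin (nn i) → (j : Fin m) → Fin (mm j) → M) :
    ∑ j, ∑ q, ∑ i, ∑ p, f i p j q = ∑ i, ∑ j, ∑ p, ∑ q, f i p j q := by
  have s2 : ∑ j, ∑ q, ∑ i, ∑ p, f i p j q = ∑ j, ∑ i, ∑ q, ∑ p, f i p j q :=
    Finset.sum_congr rfl fun j _ => Finset.sum_comm
  have s3 : ∑ j, ∑ i, ∑ q, ∑ p, f i p j q = ∑ j, ∑ i, ∑ p, ∑ q, f i p j q :=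
    Finset.sum_congr rfl fun j _ => Finset.sum_congr rfl fun i _ => Finset.sum_comm
  rw [s2, s3, Finset.sum_comm]

/-- under conditions (2), (4), (11), (17)–(22), (23) and (24),
one has `ς̄(h⊗k) = ς̄(h⁽¹⁾⊗k⁽¹⁾)(h⁽²⁾k⁽²⁾·1_A)`. -/
theorem statement14 {k H A : Type*} [Field k] [Ring H] [Algebra k H] [Ring A] [Algebra k A]
    (W : WeakHopfData k H) (hW : IsWeakHopf W) (ρ : H →ₗ[k] A →ₗ[k] A)
    (ς : H ⊗[k] H →ₗ[k] A) (ςbar : H ⊗[k] H →ₗ[k] A)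
    (h2 : cond2 W ρ) (h4 : cond4 ρ) (h11 : cond11 ρ)
    (h17 : cond17 W ρ ⇑ς) (h18 : cond18 W ρ ⇑ς) (h19 : cond19 W ρ ⇑ς)
    (h20 : cond20 W ρ ⇑ς) (h21 : cond21 W ρ ⇑ς) (h22 : cond22 W ρ)
    (h23 : cond23 W ρ ⇑ςbar) (h24 : cond24 W ρ ⇑ς ⇑ςbar) :
    ∀ (h g : H) (n : ℕ) (x y : Fin n → H) (m : ℕ) (u v : Fin m → H),
      W.Δ h = ∑ i, x i ⊗ₜ[k] y i → W.Δ g = ∑ j, u j ⊗ₜ[k] v j →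
        ςbar (h ⊗ₜ[k] g) = ∑ i, ∑ j, ςbar (x i ⊗ₜ[k] u j) * ρ (y i * v j) 1 := by
  intro h g n x y m u v hx hu
  classical
  choose nx ax bx hxr using fun i => exists_fin_rep (W.Δ (x i))
  choose ny ay cy hyr using fun i => exists_fin_rep (W.Δ (y i))
  choose nu au bu hur using fun j => exists_fin_rep (W.Δ (u j))
  choose nv av cv hvr using fun j => exists_fin_rep (W.Δ (v j))
  set inner : (H ⊗[k] H) ⊗[k] (H ⊗[k] H) →ₗ[k] A :=
    LinearMap.mul' k A ∘ₗ TensorProduct.map ς ςbar ∘ₗ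
      (TensorProduct.tensorTensorTensorComm k H H H H).toLinearMap with hinner
  set Ψ : (H ⊗[k] (H ⊗[k] H)) ⊗[k] (H ⊗[k] (H ⊗[k] H)) →ₗ[k] A :=
    LinearMap.mul' k A ∘ₗ TensorProduct.map ςbar inner ∘ₗ
      (TensorProduct.tensorTensorTensorComm k H (H ⊗[k] H) H (H ⊗[k] H)).toLinearMap with hΨdef
  have hΨ : ∀ a b c d e f : H,
      Ψ ((a ⊗ₜ[k] (b ⊗ₜ[k] c)) ⊗ₜ[k] (d ⊗ₜ[k] (e ⊗ₜ[k] f))) =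
        ςbar (a ⊗ₜ[k] d) * (ς (b ⊗ₜ[k] e) * ςbar (c ⊗ₜ[k] f)) := by
    intro a b c d e f
    simp [hΨdef, hinner, TensorProduct.tensorTensorTensorComm_tmul]
  have easum : ∀ (z : (H ⊗[k] H) ⊗[k] H) (N : ℕ) (w : Fin N → (H ⊗[k] H) ⊗[k] H),
      z = ∑ i, w i → (TensorProduct.assoc k H H H) z =
        ∑ i, (TensorProduct.assoc k H H H) (w i) := by
    intro z N w hz
    rw [hz]
    exact map_sum ((TensorProduct.assoc k H H H).toLinearMap) w Finset.univ
  have hAh : (TensorProduct.assoc k H H H) ((LinearMap.rTensor H W.Δ) (W.Δ h)) =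
      ∑ i, ∑ p, ax i p ⊗ₜ[k] (bx i p ⊗ₜ[k] y i) := by
    have h1 : (LinearMap.rTensor H W.Δ) (W.Δ h) =
        ∑ i, ∑ p, (ax i p ⊗ₜ[k] bx i p) ⊗ₜ[k] y i := by
      rw [hx, map_sum]
      simp only [LinearMap.rTensor_tmul, hxr, TensorProduct.sum_tmul]
    rw [easum _ n _ h1]
    simp only [map_sum, TensorProduct.assoc_tmul]
  have hAg : (TensorProduct.assoc k H H H) ((LinearMap.rTensor H W.Δ) (W.Δ g)) =
      ∑ j, ∑ q, au j q ⊗ₜ[k] (bu j q ⊗ₜ[k] v j) := by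
    have h1 : (LinearMap.rTensor H W.Δ) (W.Δ g) =
        ∑ j, ∑ q, (au j q ⊗ₜ[k] bu j q) ⊗ₜ[k] v j := by
      rw [hu, map_sum]
      simp only [LinearMap.rTensor_tmul, hur, TensorProduct.sum_tmul]
    rw [easum _ m _ h1]
    simp only [map_sum, TensorProduct.assoc_tmul]
  have hBh : (LinearMap.lTensor H W.Δ) (W.Δ h) =
      ∑ i, ∑ p, x i ⊗ₜ[k] (ay i p ⊗ₜ[k] cy i p) := by
    rw [hx, map_sum]
    simp only [LinearMap.lTensor_tmul, hyr, TensorProduct.tmul_sum]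
  have hBg : (LinearMap.lTensor H W.Δ) (W.Δ g) =
      ∑ j, ∑ q, u j ⊗ₜ[k] (av j q ⊗ₜ[k] cv j q) := by
    rw [hu, map_sum]
    simp only [LinearMap.lTensor_tmul, hvr, TensorProduct.tmul_sum]
  calc ςbar (h ⊗ₜ[k] g)
      = ∑ i, ∑ j, ρ (x i * u j) 1 * ςbar (y i ⊗ₜ[k] v j) :=
        h23 h g n x y m u v hx hu
    _ = ∑ i, ∑ j, ∑ p, ∑ q,
        ςbar (ax i p ⊗ₜ[k] au j q) * (ς (bx i p ⊗ₜ[k] bu j q) * ςbar (y i ⊗ₜ[k] v j)) := by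
        refine Finset.sum_congr rfl fun i _ => Finset.sum_congr rfl fun j _ => ?_
        rw [← (h24 (x i) (u j) (nx i) (ax i) (bx i) (nu j) (au j) (bu j)
          (hxr i) (hur j)).2, Finset.sum_mul]
        refine Finset.sum_congr rfl fun p _ => ?_
        rw [Finset.sum_mul]
        exact Finset.sum_congr rfl fun q _ => mul_assoc _ _ _
    _ = ∑ j, ∑ q, ∑ i, ∑ p,
        ςbar (ax i p ⊗ₜ[k] au j q) * (ς (bx i p ⊗ₜ[k] bu j q) * ςbar (y i ⊗ₜ[k] v j)) :=
        (sum_swap_blocks _).symm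
    _ = Ψ (((TensorProduct.assoc k H H H) ((LinearMap.rTensor H W.Δ) (W.Δ h))) ⊗ₜ[k]
          ((TensorProduct.assoc k H H H) ((LinearMap.rTensor H W.Δ) (W.Δ g)))) := by
        rw [hAh, hAg]
        simp only [TensorProduct.sum_tmul, TensorProduct.tmul_sum, map_sum, hΨ]
    _ = Ψ (((LinearMap.lTensor H W.Δ) (W.Δ h)) ⊗ₜ[k]
          ((LinearMap.lTensor H W.Δ) (W.Δ g))) := by
        rw [hW.coassoc h, hW.coassoc g]
    _ = ∑ j, ∑ q, ∑ i, ∑ p,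
        ςbar (x i ⊗ₜ[k] u j) * (ς (ay i p ⊗ₜ[k] av j q) * ςbar (cy i p ⊗ₜ[k] cv j q)) := by
        rw [hBh, hBg]
        simp only [TensorProduct.sum_tmul, TensorProduct.tmul_sum, map_sum, hΨ]
    _ = ∑ i, ∑ j, ∑ p, ∑ q,
        ςbar (x i ⊗ₜ[k] u j) * (ς (ay i p ⊗ₜ[k] av j q) * ςbar (cy i p ⊗ₜ[k] cv j q)) :=
        sum_swap_blocks _
    _ = ∑ i, ∑ j, ςbar (x i ⊗ₜ[k] u j) * ρ (y i * v j) 1 := by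
        refine Finset.sum_congr rfl fun i _ => Finset.sum_congr rfl fun j _ => ?_
        rw [← (h24 (y i) (v j) (ny i) (ay i) (cy i) (nv j) (av j) (cv j)
          (hyr i) (hvr j)).1, Finset.mul_sum]
        exact Finset.sum_congr rfl fun p _ => by rw [Finset.mul_sum]
end

section
/- Assume ρ and a k-bilinear H^R-balanced map σ:H×H→A satisfy conditions (1)–(10). Let ∇ρ:A⊗H→A⊗H be the k-linear map ∇ρ(a⊗h):=a(h⁽¹⁾·1_A)⊗h⁽²⁾. Then for all a∈A, l∈H^L and h∈H: ∇ρ(a(l·1_A)⊗h) = ∇ρ(a⊗lh). -/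
open scoped TensorProduct

section Aux
variable {k H A : Type*} [Field k] [Ring H] [Algebra k H] [Ring A] [Algebra k A]

lemma nabla_apply {ι : Type*} (W : WeakHopfData k H) (ρ : H →ₗ[k] A →ₗ[k] A) (a : A) (h : H)
    (S : Finset ι) (x y : ι → H) (hS : W.Δ h = ∑ i ∈ S, x i ⊗ₜ[k] y i) :
    nabla W ρ (a ⊗ₜ[k] h) = ∑ i ∈ S, (a * ρ (x i) 1) ⊗ₜ[k] y i := by
  simp only [nabla, LinearMap.comp_apply, LinearMap.lTensor_tmul, hS,
    TensorProduct.tmul_sum, map_sum]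
  refine Finset.sum_congr rfl fun i _ => ?_
  simp [LinearMap.mul'_apply]

lemma comul_piL (W : WeakHopfData k H) (hW : IsWeakHopf W) (g : H) :
    W.Δ (piL W g) = (piL W g ⊗ₜ[k] (1 : H)) * W.Δ 1 := by
  obtain ⟨S, hS⟩ := TensorProduct.exists_finset (W.Δ (1 : H))
  have hpi : piL W g = ∑ i ∈ S, W.ε (i.1 * g) • i.2 := by
    simp [piL, hS, map_sum]
  have key : ∑ i ∈ S, i.1 ⊗ₜ[k] (W.Δ i.2) =
      ∑ i ∈ S, i.1 ⊗ₜ[k] ((i.2 ⊗ₜ[k] (1 : H)) * W.Δ 1) := by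
    have h1 := hW.weak_comul_one₁
    rw [hS] at h1
    simp only [map_sum, LinearMap.lTensor_tmul, TensorProduct.sum_tmul,
      TensorProduct.assoc_tmul,
      Finset.sum_mul, Algebra.TensorProduct.tmul_mul_tmul, one_mul, mul_one] at h1
    rw [← hS] at h1
    exact h1
  have := congrArg
    ((TensorProduct.lid k (H ⊗[k] H)).toLinearMap ∘ₗ
      LinearMap.rTensor (H ⊗[k] H) (W.ε ∘ₗ LinearMap.mulRight k g)) key
  simp only [map_sum, LinearMap.comp_apply, LinearMap.rTensor_tmul,
    LinearEquiv.coe_coe, TensorProduct.lid_tmul, LinearMap.mulRight_apply] at this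
  rw [hpi, map_sum]
  simp only [map_smul]
  rw [this, TensorProduct.sum_tmul, Finset.sum_mul]
  refine Finset.sum_congr rfl fun i _ => ?_
  rw [← smul_mul_assoc, TensorProduct.smul_tmul']

lemma comul_mul_left (W : WeakHopfData k H) (hW : IsWeakHopf W) {l : H}
    (hl : l ∈ HL W) (h : H) : W.Δ (l * h) = (l ⊗ₜ[k] (1 : H)) * W.Δ h := by
  obtain ⟨g, rfl⟩ := hl
  rw [hW.comul_mul, comul_piL W hW g, mul_assoc, ← hW.comul_mul, one_mul]

end Aux

theorem statement16' {k H A : Type*} [Field k] [Ring H] [Algebra k H] [Ring A] [Algebra k A]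
    (W : WeakHopfData k H) (hW : IsWeakHopf W) (ρ : H →ₗ[k] A →ₗ[k] A)
    (h3 : cond3 W ρ) :
    ∀ (a : A) (h : H), ∀ l ∈ HL W,
      nabla W ρ ((a * ρ l 1) ⊗ₜ[k] h) = nabla W ρ (a ⊗ₜ[k] (l * h)) := by
  intro a h l hl
  obtain ⟨S, hS⟩ := TensorProduct.exists_finset (W.Δ h)
  have hlh : W.Δ (l * h) = ∑ i ∈ S, (l * i.1) ⊗ₜ[k] i.2 := by
    rw [comul_mul_left W hW hl, hS, Finset.mul_sum]
    refine Finset.sum_congr rfl fun i _ => ?_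
    rw [Algebra.TensorProduct.tmul_mul_tmul, one_mul]
  rw [nabla_apply W ρ _ h S (fun i => i.1) (fun i => i.2) hS,
    nabla_apply W ρ a (l * h) S (fun i => l * i.1) (fun i => i.2) hlh]
  refine Finset.sum_congr rfl fun i _ => ?_
  rw [(h3 i.1 1 l hl).2, ← mul_assoc]

/-- under conditions (1)–(10), `∇ρ(a(l·1_A) ⊗ h) = ∇ρ(a ⊗ lh)`
for all `a ∈ A`, `l ∈ H^L` and `h ∈ H`. -/
theorem statement16 {k H A : Type*} [Field k] [Ring H] [Algebra k H] [Ring A] [Algebra k A]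
    (W : WeakHopfData k H) (hW : IsWeakHopf W) (ρ : H →ₗ[k] A →ₗ[k] A)
    (σb : H →ₗ[k] H →ₗ[k] A) (hbal : HRBalanced W (fun h g => σb h g))
    (h1 : cond1 W ρ) (h2 : cond2 W ρ) (h3 : cond3 W ρ) (h4 : cond4 ρ)
    (h5 : cond5 W ρ (fun h g => σb h g)) (h6 : cond6 W ρ (fun h g => σb h g))
    (h7 : cond7 ρ (fun h g => σb h g)) (h8 : cond8 W ρ (fun h g => σb h g))
    (h9 : cond9 W ρ (fun h g => σb h g)) (h10 : cond10 W ρ) :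
    ∀ (a : A) (h : H), ∀ l ∈ HL W,
      nabla W ρ ((a * ρ l 1) ⊗ₜ[k] h) = nabla W ρ (a ⊗ₜ[k] (l * h)) := by
  exact statement16' W hW ρ h3
end

section
/- Assume ρ is a unital measuring (conditions (1)–(4)). Let N ⊆ A⊗H be the k-linear span of the elements a(l·1_A)⊗h − a⊗lh with a∈A, l∈H^L, h∈H (so that (A⊗H)/N is the balanced tensor product A⊗_{H^L}H for the right H^L-action a·l := a(l·1_A)). Then for all a∈A and h∈H, the element a(h⁽¹⁾·1_A)⊗h⁽²⁾ − a⊗h lies in N; equivalently, the canonical projection π:A⊗H→(A⊗H)/N satisfies π∘∇ρ = π, where ∇ρ(a⊗h):=a(h⁽¹⁾·1_A)⊗h⁽²⁾. -/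
open scoped TensorProduct

section Aux

variable {k H A : Type*} [Field k] [Ring H] [Algebra k H] [Ring A] [Algebra k A]

theorem aux_exists_fin {M N : Type*} [AddCommGroup M] [Module k M]
    [AddCommGroup N] [Module k N] (z : M ⊗[k] N) :
    ∃ (n : ℕ) (x : Fin n → M) (y : Fin n → N), z = ∑ i, x i ⊗ₜ[k] y i := by
  obtain ⟨S, hS⟩ := TensorProduct.exists_finset z
  refine ⟨S.card, fun i => ((S.equivFin.symm i : M × N)).1,
    fun i => ((S.equivFin.symm i : M × N)).2, ?_⟩
  rw [hS, ← Finset.sum_attach S (fun p => p.1 ⊗ₜ[k] p.2)]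
  exact (Fintype.sum_equiv S.equivFin.symm _ _ fun i => rfl).symm

theorem aux_piL_repr (W : WeakHopfData k H) (m : ℕ) (u v : Fin m → H)
    (h1 : W.Δ 1 = ∑ j, u j ⊗ₜ[k] v j) (x : H) :
    piL W x = ∑ j, W.ε (u j * x) • v j := by
  simp [piL, h1, map_sum]

theorem aux_sum_piL_mul (W : WeakHopfData k H) (hW : IsWeakHopf W) (h : H)
    (n : ℕ) (x y : Fin n → H) (hΔ : W.Δ h = ∑ i, x i ⊗ₜ[k] y i) :
    ∑ i, piL W (x i) * y i = h := by
  obtain ⟨m, u, v, h1⟩ := aux_exists_fin (W.Δ (1 : H))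
  have hh : W.Δ h = ∑ j, ∑ i, (u j * x i) ⊗ₜ[k] (v j * y i) := by
    calc W.Δ h = W.Δ (1 * h) := by rw [one_mul]
    _ = W.Δ 1 * W.Δ h := hW.comul_mul 1 h
    _ = _ := by
        rw [h1, hΔ, Finset.sum_mul_sum]
        simp [Algebra.TensorProduct.tmul_mul_tmul]
  have hc := hW.counit_left h
  rw [hh] at hc
  simp only [map_sum, LinearMap.rTensor_tmul, TensorProduct.lid_tmul,
    LinearMap.coe_comp, Function.comp_apply] at hc
  calc ∑ i, piL W (x i) * y i
      = ∑ i, ∑ j, W.ε (u j * x i) • (v j * y i) := by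
        simp [aux_piL_repr W m u v h1, Finset.sum_mul, smul_mul_assoc]
    _ = ∑ j, ∑ i, W.ε (u j * x i) • (v j * y i) := Finset.sum_comm
    _ = h := hc

end Aux

/-- if `ρ` is a unital measuring, then for all `a ∈ A`, `h ∈ H`
the element `a(h⁽¹⁾·1_A) ⊗ h⁽²⁾ - a ⊗ h = ∇ρ(a ⊗ h) - a ⊗ h` lies in the
subspace `N` spanned by the elements `a(l·1_A) ⊗ h - a ⊗ lh` (`l ∈ H^L`);
equivalently, the canonical projection `π : A ⊗ H → (A ⊗ H)/N` satisfies
`π ∘ ∇ρ = π`. -/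
theorem statement17 {k H A : Type*} [Field k] [Ring H] [Algebra k H] [Ring A] [Algebra k A]
    (W : WeakHopfData k H) (hW : IsWeakHopf W) (ρ : H →ₗ[k] A →ₗ[k] A)
    (h1 : cond1 W ρ) (h2 : cond2 W ρ) (h3 : cond3 W ρ) (h4 : cond4 ρ) :
    (∀ (a : A) (h : H), nabla W ρ (a ⊗ₜ[k] h) - a ⊗ₜ[k] h ∈ relN W ρ) ∧
      (relN W ρ).mkQ ∘ₗ nabla W ρ = (relN W ρ).mkQ := by
  have key : ∀ (a : A) (h : H), nabla W ρ (a ⊗ₜ[k] h) - a ⊗ₜ[k] h ∈ relN W ρ := by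
    intro a h
    obtain ⟨n, x, y, hΔ⟩ := aux_exists_fin (W.Δ h)
    have hnab : nabla W ρ (a ⊗ₜ[k] h) = ∑ i, (a * ρ (x i) 1) ⊗ₜ[k] y i := by
      rw [nabla, LinearMap.comp_apply, LinearMap.comp_apply, LinearMap.lTensor_tmul, hΔ,
        TensorProduct.tmul_sum, map_sum, map_sum]
      refine Finset.sum_congr rfl fun i _ => ?_
      rw [LinearEquiv.coe_coe, TensorProduct.assoc_symm_tmul, LinearMap.rTensor_tmul]
      simp
    have hah : a ⊗ₜ[k] h = ∑ i, a ⊗ₜ[k] (piL W (x i) * y i) := by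
      rw [← TensorProduct.tmul_sum, aux_sum_piL_mul W hW h n x y hΔ]
    rw [hnab, hah, ← Finset.sum_sub_distrib]
    refine Submodule.sum_mem _ fun i _ => Submodule.subset_span ?_
    exact ⟨a, piL W (x i), y i, ⟨x i, rfl⟩, by rw [h1 (x i)]⟩
  refine ⟨key, ?_⟩
  ext a h
  simp only [TensorProduct.AlgebraTensorModule.curry_apply, TensorProduct.curry_apply,
    LinearMap.coe_restrictScalars, LinearMap.coe_comp, Function.comp_apply, Submodule.mkQ_apply]
  exact (Submodule.Quotient.eq _).mpr (key a h)
end
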